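/- arXiv:1502.03382 — 6 statements merged into one kernel-verified Lean document; each statement's English description precedes it below -/
import Mathlib

section
/- For every x > 1 one has φ(x) := ζ(x)/(x²−1) ≤ 2^{−2/3}, where ζ(x) = ( (3/4)·( x·√(x²−1) − arcosh x ) )^{2/3}. -/
open Real Filter

/-- The inverse hyperbolic cosine, `arcosh x = log (x + √(x² - 1))`. -/
noncomputable def arcosh (x : ℝ) : ℝ := Real.log (x + Real.sqrt (x ^ 2 - 1))

/-- The variable `ζ(x) = ((3/4)(x√(x²-1) - arcosh x))^{2/3}` for `x ≥ 1`. -/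
noncomputable def zeta (x : ℝ) : ℝ :=
  ((3 / 4) * (x * Real.sqrt (x ^ 2 - 1) - _root_.arcosh x)) ^ ((2 : ℝ) / 3)

lemma hasDerivAt_sqrtu (x : ℝ) (hx : 1 < x) :
    HasDerivAt (fun y => Real.sqrt (y ^ 2 - 1)) (x / Real.sqrt (x ^ 2 - 1)) x := by
  have hu : (0:ℝ) < x ^ 2 - 1 := by nlinarith
  have h1 : HasDerivAt (fun y : ℝ => y ^ 2 - 1) (2 * x) x := by
    simpa using (hasDerivAt_pow 2 x).sub_const 1
  have h2 := (Real.hasDerivAt_sqrt hu.ne').comp x h1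
  refine HasDerivAt.congr_deriv h2 ?_
  have hs : Real.sqrt (x ^ 2 - 1) ≠ 0 := (Real.sqrt_pos.mpr hu).ne'
  field_simp

lemma hasDerivAt_arcosh (x : ℝ) (hx : 1 < x) :
    HasDerivAt _root_.arcosh (1 / Real.sqrt (x ^ 2 - 1)) x := by
  have hu : (0:ℝ) < x ^ 2 - 1 := by nlinarith
  have hs : 0 < Real.sqrt (x ^ 2 - 1) := Real.sqrt_pos.mpr hu
  have hsq : Real.sqrt (x ^ 2 - 1) ^ 2 = x ^ 2 - 1 := Real.sq_sqrt hu.le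
  have h1 : HasDerivAt (fun y : ℝ => y + Real.sqrt (y ^ 2 - 1))
      (1 + x / Real.sqrt (x ^ 2 - 1)) x :=
    (hasDerivAt_id x).add (hasDerivAt_sqrtu x hx)
  have hne : x + Real.sqrt (x ^ 2 - 1) ≠ 0 := by positivity
  have h2 := (Real.hasDerivAt_log hne).comp x h1
  have h3 : HasDerivAt _root_.arcosh ((x + Real.sqrt (x ^ 2 - 1))⁻¹ * (1 + x / Real.sqrt (x ^ 2 - 1))) x := h2
  refine HasDerivAt.congr_deriv h3 ?_
  field_simp
  nlinarith [hsq]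

lemma hasDerivAt_G (x : ℝ) (hx : 1 < x) :
    HasDerivAt (fun y => y * Real.sqrt (y ^ 2 - 1) - _root_.arcosh y)
      (2 * Real.sqrt (x ^ 2 - 1)) x := by
  have hu : (0:ℝ) < x ^ 2 - 1 := by nlinarith
  have hs : 0 < Real.sqrt (x ^ 2 - 1) := Real.sqrt_pos.mpr hu
  have hsq : Real.sqrt (x ^ 2 - 1) ^ 2 = x ^ 2 - 1 := Real.sq_sqrt hu.le
  have h1 := ((hasDerivAt_id x).mul (hasDerivAt_sqrtu x hx)).sub (hasDerivAt_arcosh x hx)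
  refine HasDerivAt.congr_deriv h1 ?_
  field_simp
  nlinarith [hsq, show id x = x from rfl]

lemma hasDerivAt_F (x : ℝ) (hx : 1 < x) :
    HasDerivAt (fun y => (2/3) * ((y ^ 2 - 1) * Real.sqrt (y ^ 2 - 1))
        - (y * Real.sqrt (y ^ 2 - 1) - _root_.arcosh y))
      (2 * (x - 1) * Real.sqrt (x ^ 2 - 1)) x := by
  have hu : (0:ℝ) < x ^ 2 - 1 := by nlinarith
  have hs : 0 < Real.sqrt (x ^ 2 - 1) := Real.sqrt_pos.mpr hu
  have hsq : Real.sqrt (x ^ 2 - 1) ^ 2 = x ^ 2 - 1 := Real.sq_sqrt hu.le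
  have hu' : HasDerivAt (fun y : ℝ => y ^ 2 - 1) (2 * x) x := by
    simpa using (hasDerivAt_pow 2 x).sub_const 1
  have h1 := ((hu'.mul (hasDerivAt_sqrtu x hx)).const_mul (2/3 : ℝ)).sub (hasDerivAt_G x hx)
  refine HasDerivAt.congr_deriv h1 ?_
  field_simp
  nlinarith [hsq, hs, mul_pos hs hs]

lemma contOn_arcosh : ContinuousOn _root_.arcosh (Set.Ici 1) := by
  apply ContinuousOn.log
  · exact Continuous.continuousOn (by continuity)
  · intro y hy
    have hy1 : (1:ℝ) ≤ y := hy
    have : (0:ℝ) < y + Real.sqrt (y ^ 2 - 1) := by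
      have := Real.sqrt_nonneg (y ^ 2 - 1); linarith
    exact this.ne'

lemma G_nonneg (x : ℝ) (hx : 1 < x) :
    0 ≤ x * Real.sqrt (x ^ 2 - 1) - _root_.arcosh x := by
  have hmono : StrictMonoOn (fun y => y * Real.sqrt (y ^ 2 - 1) - _root_.arcosh y) (Set.Ici 1) := by
    apply strictMonoOn_of_deriv_pos (convex_Ici 1)
    · exact (Continuous.continuousOn (by continuity)).sub contOn_arcosh
    · intro y hy
      rw [interior_Ici] at hy
      have hy' : (1:ℝ) < y := hy
      rw [(hasDerivAt_G y hy').deriv]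
      have : (0:ℝ) < y ^ 2 - 1 := by nlinarith
      positivity
  have h := hmono (Set.self_mem_Ici) (Set.mem_Ici.mpr hx.le) hx
  simp only [_root_.arcosh] at h ⊢
  norm_num at h
  linarith

lemma F_nonneg (x : ℝ) (hx : 1 < x) :
    x * Real.sqrt (x ^ 2 - 1) - _root_.arcosh x ≤ (2/3) * ((x ^ 2 - 1) * Real.sqrt (x ^ 2 - 1)) := by
  have hmono : StrictMonoOn (fun y => (2/3) * ((y ^ 2 - 1) * Real.sqrt (y ^ 2 - 1))
      - (y * Real.sqrt (y ^ 2 - 1) - _root_.arcosh y)) (Set.Ici 1) := by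
    apply strictMonoOn_of_deriv_pos (convex_Ici 1)
    · exact (Continuous.continuousOn (by continuity)).sub
        ((Continuous.continuousOn (by continuity)).sub contOn_arcosh)
    · intro y hy
      rw [interior_Ici] at hy
      have hy' : (1:ℝ) < y := hy
      rw [(hasDerivAt_F y hy').deriv]
      have h1 : (0:ℝ) < y ^ 2 - 1 := by nlinarith
      have h2 : (0:ℝ) < y - 1 := by linarith
      positivity
  have h := hmono (Set.self_mem_Ici) (Set.mem_Ici.mpr hx.le) hx
  simp only [_root_.arcosh] at h ⊢
  norm_num at h
  linarith

theorem phi_le :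
    ∀ x : ℝ, 1 < x → zeta x / (x ^ 2 - 1) ≤ (2 : ℝ) ^ (-(2 : ℝ) / 3) := by
  intro x hx
  have hu : (0:ℝ) < x ^ 2 - 1 := by nlinarith
  have hs : 0 < Real.sqrt (x ^ 2 - 1) := Real.sqrt_pos.mpr hu
  have hsq : Real.sqrt (x ^ 2 - 1) ^ 2 = x ^ 2 - 1 := Real.sq_sqrt hu.le
  set s := Real.sqrt (x ^ 2 - 1) with hsdef
  have hG := G_nonneg x hx
  have hF := F_nonneg x hx
  have hbase : (0:ℝ) ≤ (3/4) * (x * s - _root_.arcosh x) := by linarith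
  have hkey : (3/4) * (x * s - _root_.arcosh x) ≤ (1/2) * s ^ 3 := by nlinarith [hsq]
  have h1 : zeta x ≤ ((1/2) * s ^ 3) ^ ((2:ℝ)/3) := by
    rw [zeta]
    exact Real.rpow_le_rpow hbase hkey (by norm_num)
  have h2 : ((1/2) * s ^ 3 : ℝ) ^ ((2:ℝ)/3) = (2:ℝ) ^ (-(2:ℝ)/3) * (x ^ 2 - 1) := by
    rw [Real.mul_rpow (by norm_num) (by positivity)]
    congr 1
    · rw [show ((1:ℝ)/2) = (2:ℝ)⁻¹ by norm_num,
        Real.inv_rpow (by norm_num), ← Real.rpow_neg (by norm_num)]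
      norm_num
    · rw [← Real.rpow_natCast s 3, ← Real.rpow_mul hs.le]
      norm_num
      exact hsq
  rw [div_le_iff₀ hu]
  calc zeta x ≤ ((1/2) * s ^ 3) ^ ((2:ℝ)/3) := h1
    _ = (2:ℝ) ^ (-(2:ℝ)/3) * (x ^ 2 - 1) := h2
end

section
/- The function φ(x) = ζ(x)/(x²−1) tends to 2^{−2/3} as x → 1 from the right, where ζ(x) = ( (3/4)·( x·√(x²−1) − arcosh x ) )^{2/3}. -/
open Real Filter

noncomputable def F (x : ℝ) : ℝ := x * Real.sqrt (x ^ 2 - 1) - _root_.arcosh x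
noncomputable def G (x : ℝ) : ℝ := (x ^ 2 - 1) ^ ((3 : ℝ) / 2)

lemma sqrt_hasDeriv {x : ℝ} (hx : 1 < x) :
    HasDerivAt (fun y => Real.sqrt (y ^ 2 - 1)) (x / Real.sqrt (x ^ 2 - 1)) x := by
  have h1 : (0:ℝ) < x ^ 2 - 1 := by nlinarith
  have hs : (0:ℝ) < Real.sqrt (x ^ 2 - 1) := Real.sqrt_pos.2 h1
  have h := (Real.hasDerivAt_sqrt (ne_of_gt h1)).comp x
    (((hasDerivAt_pow 2 x).sub_const 1))
  refine h.congr_deriv ?_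
  field_simp
  ring

lemma F_hasDeriv {x : ℝ} (hx : 1 < x) :
    HasDerivAt F (2 * Real.sqrt (x ^ 2 - 1)) x := by
  have h1 : (0:ℝ) < x ^ 2 - 1 := by nlinarith
  have hs : (0:ℝ) < Real.sqrt (x ^ 2 - 1) := Real.sqrt_pos.2 h1
  have hsq : Real.sqrt (x ^ 2 - 1) ^ 2 = x ^ 2 - 1 := Real.sq_sqrt h1.le
  have hmul : HasDerivAt (fun y => y * Real.sqrt (y ^ 2 - 1))
      (1 * Real.sqrt (x ^ 2 - 1) + x * (x / Real.sqrt (x ^ 2 - 1))) x :=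
    (hasDerivAt_id x).mul (sqrt_hasDeriv hx)
  have hpos : 0 < x + Real.sqrt (x ^ 2 - 1) := by linarith
  have hlog : HasDerivAt (fun y => Real.log (y + Real.sqrt (y ^ 2 - 1)))
      ((1 + x / Real.sqrt (x ^ 2 - 1)) / (x + Real.sqrt (x ^ 2 - 1))) x :=
    ((hasDerivAt_id x).add (sqrt_hasDeriv hx)).log (ne_of_gt hpos)
  have := hmul.sub hlog
  refine this.congr_deriv ?_
  have hne : Real.sqrt (x ^ 2 - 1) ≠ 0 := ne_of_gt hs
  rw [show (1 + x / Real.sqrt (x ^ 2 - 1)) / (x + Real.sqrt (x ^ 2 - 1))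
      = 1 / Real.sqrt (x ^ 2 - 1) from by
    rw [div_eq_div_iff (ne_of_gt hpos) hne]
    field_simp
    ring]
  field_simp
  nlinarith [hsq]

lemma G_hasDeriv {x : ℝ} (hx : 1 < x) :
    HasDerivAt G (3 * x * Real.sqrt (x ^ 2 - 1)) x := by
  have h1 : (0:ℝ) < x ^ 2 - 1 := by nlinarith
  have h := (Real.hasDerivAt_rpow_const (p := (3:ℝ)/2) (Or.inl (ne_of_gt h1))).comp x
    ((hasDerivAt_pow 2 x).sub_const 1)
  refine h.congr_deriv ?_
  rw [Real.sqrt_eq_rpow]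
  have : (3:ℝ)/2 - 1 = 1/2 := by norm_num
  rw [this]
  push_cast
  ring

lemma F_contAt {y : ℝ} (hy : 1 ≤ y) : ContinuousAt F y := by
  have h1 : (0:ℝ) ≤ y ^ 2 - 1 := by nlinarith
  have hpos : 0 < y + Real.sqrt (y ^ 2 - 1) := by
    have := Real.sqrt_nonneg (y ^ 2 - 1); nlinarith
  have hinner : ContinuousAt (fun x : ℝ => x + Real.sqrt (x ^ 2 - 1)) y := by fun_prop
  have hlog : ContinuousAt (fun x : ℝ => Real.log (x + Real.sqrt (x ^ 2 - 1))) y := by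
    have := ContinuousAt.comp (x := y) (Real.continuousAt_log (ne_of_gt hpos)) hinner
    exact this
  have hm : ContinuousAt (fun x : ℝ => x * Real.sqrt (x ^ 2 - 1)) y := by fun_prop
  exact hm.sub hlog

lemma F_pos {x : ℝ} (hx : 1 < x) : 0 < F x := by
  have hmono : StrictMonoOn F (Set.Ici 1) := by
    apply strictMonoOn_of_deriv_pos (convex_Ici 1)
    · intro y hy
      simp only [Set.mem_Ici] at hy
      have h1 : (0:ℝ) ≤ y ^ 2 - 1 := by nlinarith
      have hpos : 0 < y + Real.sqrt (y ^ 2 - 1) := by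
        have := Real.sqrt_nonneg (y ^ 2 - 1); linarith
      exact (F_contAt hy).continuousWithinAt
    · intro y hy
      rw [interior_Ici] at hy
      rw [(F_hasDeriv hy).deriv]
      have : (0:ℝ) < y ^ 2 - 1 := by nlinarith [hy.out]
      positivity
  have h0 : F 1 = 0 := by
    simp [F, _root_.arcosh]
  have := hmono (Set.self_mem_Ici) (Set.mem_Ici.2 hx.le) hx
  rwa [h0] at this

lemma tendsto_FG : Tendsto (fun x => F x / G x) (nhdsWithin 1 (Set.Ioi 1)) (nhds (2/3)) := by
  apply HasDerivAt.lhopital_zero_nhdsGT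
    (f' := fun x => 2 * Real.sqrt (x ^ 2 - 1)) (g' := fun x => 3 * x * Real.sqrt (x ^ 2 - 1))
  · filter_upwards [self_mem_nhdsWithin] with x hx
    exact F_hasDeriv hx
  · filter_upwards [self_mem_nhdsWithin] with x hx
    exact G_hasDeriv hx
  · filter_upwards [self_mem_nhdsWithin] with x hx
    have h1 : (0:ℝ) < x ^ 2 - 1 := by nlinarith [hx.out]
    have hs : (0:ℝ) < Real.sqrt (x ^ 2 - 1) := Real.sqrt_pos.2 h1
    have hx0 : (0:ℝ) < x := by linarith [hx.out]
    positivity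
  · have hc : ContinuousAt F 1 := F_contAt le_rfl
    have h0 : F 1 = 0 := by simp [F, _root_.arcosh]
    have := hc.continuousWithinAt (s := Set.Ioi 1)
    rw [ContinuousWithinAt, h0] at this
    exact this
  · have hc : ContinuousAt G 1 := by
      apply ContinuousAt.comp (g := fun y : ℝ => y ^ ((3:ℝ)/2))
      · exact Real.continuousAt_rpow_const _ _ (Or.inr (by norm_num))
      · exact ((continuous_pow 2).sub continuous_const).continuousAt
    have h0 : G 1 = 0 := by
      simp [G, Real.zero_rpow (by norm_num : ((3:ℝ)/2) ≠ 0)]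
    have := hc.continuousWithinAt (s := Set.Ioi 1)
    rw [ContinuousWithinAt, h0] at this
    exact this
  · have heq : ∀ᶠ x in nhdsWithin 1 (Set.Ioi (1:ℝ)),
        2 / (3 * x) = 2 * Real.sqrt (x ^ 2 - 1) / (3 * x * Real.sqrt (x ^ 2 - 1)) := by
      filter_upwards [self_mem_nhdsWithin] with x hx
      have h1 : (0:ℝ) < x ^ 2 - 1 := by nlinarith [hx.out]
      have hs : Real.sqrt (x ^ 2 - 1) ≠ 0 := ne_of_gt (Real.sqrt_pos.2 h1)
      have hx0 : x ≠ 0 := by nlinarith [hx.out]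
      field_simp
    apply Tendsto.congr' heq
    have : Tendsto (fun x : ℝ => 2 / (3 * x)) (nhds 1) (nhds (2/3)) := by
      have : ContinuousAt (fun x : ℝ => 2 / (3 * x)) 1 := by
        apply ContinuousAt.div continuousAt_const (continuousAt_const.mul continuousAt_id)
        norm_num
      simpa using this.tendsto
    exact this.mono_left nhdsWithin_le_nhds

theorem tendsto_phi_one :
    Tendsto (fun x : ℝ => zeta x / (x ^ 2 - 1)) (nhdsWithin 1 (Set.Ioi 1))
      (nhds ((2 : ℝ) ^ (-(2 : ℝ) / 3))) := by
  have key : Tendsto (fun x : ℝ => ((3/4) * (F x / G x)) ^ ((2:ℝ)/3))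
      (nhdsWithin 1 (Set.Ioi 1)) (nhds ((2 : ℝ) ^ (-(2 : ℝ) / 3))) := by
    have hc : ContinuousAt (fun y : ℝ => ((3/4) * y) ^ ((2:ℝ)/3)) (2/3) := by
      apply ContinuousAt.comp (g := fun y : ℝ => y ^ ((2:ℝ)/3))
      · exact Real.continuousAt_rpow_const _ _ (Or.inl (by norm_num))
      · exact continuousAt_const.mul continuousAt_id
    have hval : ((3:ℝ)/4 * (2/3)) ^ ((2:ℝ)/3) = (2:ℝ) ^ (-(2:ℝ)/3) := by
      rw [show ((3:ℝ)/4 * (2/3)) = (2:ℝ)⁻¹ by norm_num,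
        show (-(2:ℝ)/3) = -((2:ℝ)/3) by ring, Real.rpow_neg (by norm_num : (0:ℝ) ≤ 2),
        ← Real.inv_rpow (by norm_num : (0:ℝ) ≤ 2)]
    have := hc.tendsto.comp tendsto_FG
    rw [hval] at this
    exact this
  apply key.congr'
  filter_upwards [self_mem_nhdsWithin] with x hx
  have h1 : (0:ℝ) < x ^ 2 - 1 := by nlinarith [hx.out]
  have hF : 0 < F x := F_pos hx
  have hG : 0 < G x := Real.rpow_pos_of_pos h1 _
  have hGx : G x ^ ((2:ℝ)/3) = x ^ 2 - 1 := by
    rw [G, ← Real.rpow_mul h1.le]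
    norm_num
  have hdiv : ((3/4) * (F x / G x)) = ((3/4) * F x) / G x := by ring
  rw [hdiv, Real.div_rpow (by positivity) hG.le, hGx]
  rfl
end

section
/- As x → 1 from the right, ( φ(x) − 2^{−2/3} ) / ζ(x) tends to −1/5, where φ(x) = ζ(x)/(x²−1) and ζ(x) = ( (3/4)·( x·√(x²−1) − arcosh x ) )^{2/3}. That is, the coefficient α₁ in the expansion φ = α₀ + α₁ζ + α₂ζ² + ⋯ equals −1/5. -/
open Real Filter

/-- The function `φ(x) = ζ(x)/(x² - 1)`. -/
noncomputable def phi (x : ℝ) : ℝ := zeta x / (x ^ 2 - 1)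

/-! ### Auxiliary definitions -/

noncomputable def gg (x : ℝ) : ℝ := (3/4) * (x * Real.sqrt (x^2-1) - _root_.arcosh x)
noncomputable def UU (v : ℝ) : ℝ := Real.sqrt 2 * (v * Real.sqrt v * (1 + (3/20)*v))
noncomputable def LL (v : ℝ) : ℝ :=
  Real.sqrt 2 * (v * Real.sqrt v * (1 + (3/20)*v - (3/224)*v^2))

lemma sq_sub_pos {x : ℝ} (hx : 1 < x) : 0 < x^2 - 1 := by nlinarith

lemma hasDerivAt_gg {x : ℝ} (hx : 1 < x) :
    HasDerivAt gg ((3/2) * Real.sqrt (x^2-1)) x := by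
  have hs : 0 < x^2 - 1 := sq_sub_pos hx
  have hr : 0 < Real.sqrt (x^2-1) := Real.sqrt_pos.2 hs
  have hr2 : Real.sqrt (x^2-1) * Real.sqrt (x^2-1) = x^2 - 1 :=
    Real.mul_self_sqrt hs.le
  have hin : HasDerivAt (fun y : ℝ => y^2 - 1) (2*x) x := by
    simpa using ((hasDerivAt_pow 2 x).sub_const 1)
  have hsq : HasDerivAt (fun y : ℝ => Real.sqrt (y^2-1))
      (1 / (2 * Real.sqrt (x^2-1)) * (2*x)) x :=
    (Real.hasDerivAt_sqrt hs.ne').comp x hin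
  have hxs : HasDerivAt (fun y : ℝ => y * Real.sqrt (y^2-1))
      (Real.sqrt (x^2-1) + x * (1 / (2 * Real.sqrt (x^2-1)) * (2*x))) x := by
    simpa using (hasDerivAt_id x).fun_mul hsq
  have hpos : 0 < x + Real.sqrt (x^2-1) := by positivity
  have hlog : HasDerivAt _root_.arcosh
      ((1 + 1 / (2 * Real.sqrt (x^2-1)) * (2*x)) / (x + Real.sqrt (x^2-1))) x := by
    have hsum : HasDerivAt (fun y : ℝ => y + Real.sqrt (y^2-1))
        (1 + 1 / (2 * Real.sqrt (x^2-1)) * (2*x)) x := (hasDerivAt_id x).add hsq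
    exact hsum.log hpos.ne'
  have := ((hxs.fun_sub hlog).const_mul (3/4 : ℝ))
  refine this.congr_deriv ?_; symm
  have h1 : (1 + 1 / (2 * Real.sqrt (x^2-1)) * (2*x)) / (x + Real.sqrt (x^2-1))
      = 1 / Real.sqrt (x^2-1) := by
    rw [div_eq_div_iff hpos.ne' hr.ne']
    field_simp
    nlinarith [hr2]
  rw [h1]
  field_simp
  nlinarith [hr2]

lemma hasDerivAt_vsqrt {v : ℝ} (hv : 0 < v) :
    HasDerivAt (fun v : ℝ => v * Real.sqrt v) ((3/2) * Real.sqrt v) v := by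
  have hr : 0 < Real.sqrt v := Real.sqrt_pos.2 hv
  have hr2 : Real.sqrt v * Real.sqrt v = v := Real.mul_self_sqrt hv.le
  have h := (hasDerivAt_id' v).fun_mul (Real.hasDerivAt_sqrt hv.ne')
  refine h.congr_deriv ?_; symm
  field_simp
  nlinarith

lemma hasDerivAt_UU {x : ℝ} (hx : 1 < x) :
    HasDerivAt (fun x : ℝ => UU (x-1))
      (Real.sqrt 2 * ((3/2) * Real.sqrt (x-1) * (1 + (x-1)/4))) x := by
  have hv : 0 < x - 1 := by linarith
  have hr2 : Real.sqrt (x-1) * Real.sqrt (x-1) = x - 1 := Real.mul_self_sqrt hv.le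
  have hsub : HasDerivAt (fun y : ℝ => y - 1) 1 x := (hasDerivAt_id x).sub_const 1
  have h1 : HasDerivAt (fun v : ℝ => v * Real.sqrt v * (1 + (3/20)*v))
      ((3/2) * Real.sqrt (x-1) * (1 + (3/20)*(x-1)) + (x-1) * Real.sqrt (x-1) * (3/20))
      (x-1) := by
    simpa using (hasDerivAt_vsqrt hv).fun_mul
      (((hasDerivAt_id (x-1)).const_mul (3/20 : ℝ)).const_add 1)
  have h2 := (h1.comp x hsub).const_mul (Real.sqrt 2)
  simp only [Function.comp] at h2
  unfold UU
  refine h2.congr_deriv ?_; symm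
  nlinarith [hr2]

lemma hasDerivAt_LL {x : ℝ} (hx : 1 < x) :
    HasDerivAt (fun x : ℝ => LL (x-1))
      (Real.sqrt 2 * ((3/2) * Real.sqrt (x-1) * (1 + (x-1)/4 - (x-1)^2/32))) x := by
  have hv : 0 < x - 1 := by linarith
  have hr2 : Real.sqrt (x-1) * Real.sqrt (x-1) = x - 1 := Real.mul_self_sqrt hv.le
  have hsub : HasDerivAt (fun y : ℝ => y - 1) 1 x := (hasDerivAt_id x).sub_const 1
  have hpoly : HasDerivAt (fun v : ℝ => 1 + (3/20)*v - (3/224)*v^2)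
      ((3/20) - (3/224)*(2*(x-1))) (x-1) := by
    have := (((hasDerivAt_pow 2 (x-1)).const_mul (3/224 : ℝ)))
    simpa using (((hasDerivAt_id (x-1)).const_mul (3/20 : ℝ)).const_add 1).fun_sub this
  have h1 := (hasDerivAt_vsqrt hv).fun_mul hpoly
  have h2 := (h1.comp x hsub).const_mul (Real.sqrt 2)
  simp only [Function.comp] at h2
  unfold LL
  refine h2.congr_deriv ?_; symm
  nlinarith [hr2]

lemma cont_gg : ContinuousOn gg (Set.Icc 1 2) := by
  have hc1 : Continuous fun x : ℝ => x * Real.sqrt (x^2-1) := by continuity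
  have hc2 : Continuous fun x : ℝ => x + Real.sqrt (x^2-1) := by continuity
  have hlog : ContinuousOn (fun x : ℝ => Real.log (x + Real.sqrt (x^2-1)))
      (Set.Icc 1 2) := by
    apply hc2.continuousOn.log
    intro x hx
    have : (0:ℝ) ≤ Real.sqrt (x^2-1) := Real.sqrt_nonneg _
    have h1 := hx.1
    positivity
  have : ContinuousOn (fun x : ℝ => (3/4) * (x * Real.sqrt (x^2-1)
      - Real.log (x + Real.sqrt (x^2-1)))) (Set.Icc 1 2) :=
    (continuousOn_const.mul (hc1.continuousOn.sub hlog))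
  exact this.congr (fun x _ => by simp [gg, _root_.arcosh])

lemma gg_one : gg 1 = 0 := by simp [gg, _root_.arcosh]

lemma sqrt_s_eq {x : ℝ} (hx : 1 ≤ x) :
    Real.sqrt (x^2-1) = Real.sqrt (x-1) * Real.sqrt (x+1) := by
  rw [← Real.sqrt_mul (by linarith)]
  ring_nf

lemma gg_le_UU {x : ℝ} (hx : x ∈ Set.Icc (1:ℝ) 2) : gg x ≤ UU (x-1) := by
  set D := fun x : ℝ => UU (x-1) - gg x with hD
  have hmono : MonotoneOn D (Set.Icc 1 2) := by
    apply monotoneOn_of_deriv_nonneg (convex_Icc 1 2)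
    · have : Continuous fun x : ℝ => UU (x-1) := by unfold UU; continuity
      exact this.continuousOn.sub cont_gg
    · intro y hy
      rw [interior_Icc] at hy
      exact ((hasDerivAt_UU hy.1).sub (hasDerivAt_gg hy.1)).differentiableAt.differentiableWithinAt
    · intro y hy
      rw [interior_Icc] at hy
      obtain ⟨hy1, hy2⟩ := hy
      rw [((hasDerivAt_UU hy1).fun_sub (hasDerivAt_gg hy1)).deriv]
      have hv : 0 < y - 1 := by linarith
      have key : Real.sqrt (y+1) ≤ Real.sqrt 2 * (1 + (y-1)/4) := by
        have h2 : Real.sqrt 2 * (1 + (y-1)/4) = Real.sqrt (2 * (1 + (y-1)/4)^2) := by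
          rw [Real.sqrt_mul (by norm_num), Real.sqrt_sq (by linarith)]
        rw [h2]
        apply Real.sqrt_le_sqrt
        nlinarith
      have hs := sqrt_s_eq (le_of_lt hy1)
      rw [hs]
      have hvnn : 0 ≤ Real.sqrt (y-1) := Real.sqrt_nonneg _
      nlinarith [key]
  have h1 : D 1 ≤ D x := hmono (Set.left_mem_Icc.2 (by norm_num)) hx hx.1
  have hD1 : D 1 = 0 := by simp [hD, UU, gg_one]
  rw [hD1] at h1
  simp only [hD] at h1
  linarith

lemma LL_le_gg {x : ℝ} (hx : x ∈ Set.Icc (1:ℝ) 2) : LL (x-1) ≤ gg x := by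
  set D := fun x : ℝ => gg x - LL (x-1) with hD
  have hmono : MonotoneOn D (Set.Icc 1 2) := by
    apply monotoneOn_of_deriv_nonneg (convex_Icc 1 2)
    · have : Continuous fun x : ℝ => LL (x-1) := by unfold LL; continuity
      exact cont_gg.sub this.continuousOn
    · intro y hy
      rw [interior_Icc] at hy
      exact ((hasDerivAt_gg hy.1).sub (hasDerivAt_LL hy.1)).differentiableAt.differentiableWithinAt
    · intro y hy
      rw [interior_Icc] at hy
      obtain ⟨hy1, hy2⟩ := hy
      rw [((hasDerivAt_gg hy1).fun_sub (hasDerivAt_LL hy1)).deriv]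
      have hv : 0 < y - 1 := by linarith
      have hv1 : y - 1 < 1 := by linarith
      have key : Real.sqrt 2 * (1 + (y-1)/4 - (y-1)^2/32) ≤ Real.sqrt (y+1) := by
        have hnn : (0:ℝ) ≤ 1 + (y-1)/4 - (y-1)^2/32 := by nlinarith
        have h2 : Real.sqrt 2 * (1 + (y-1)/4 - (y-1)^2/32)
            = Real.sqrt (2 * (1 + (y-1)/4 - (y-1)^2/32)^2) := by
          rw [Real.sqrt_mul (by norm_num), Real.sqrt_sq hnn]
        rw [h2]
        apply Real.sqrt_le_sqrt
        have h4 : (y-1)^4 ≤ (y-1)^3 := by nlinarith [mul_pos (mul_pos hv hv) hv, mul_nonneg (mul_nonneg (mul_nonneg hv.le hv.le) hv.le) (by linarith : (0:ℝ) ≤ 1 - (y-1))]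
        nlinarith [h4]
      have hs := sqrt_s_eq (le_of_lt hy1)
      rw [hs]
      have hvnn : 0 ≤ Real.sqrt (y-1) := Real.sqrt_nonneg _
      nlinarith [key]
  have h1 : D 1 ≤ D x := hmono (Set.left_mem_Icc.2 (by norm_num)) hx hx.1
  have hD1 : D 1 = 0 := by simp [hD, LL, gg_one]
  rw [hD1] at h1
  simp only [hD] at h1
  linarith

lemma hasDerivAt_FF (b : ℝ) :
    HasDerivAt (fun v : ℝ => (v+2)⁻¹ - (1/2)*(1+(3/20)*v+b*v^2)^(-(2:ℝ)/3))
      (-1/5) 0 := by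
  have h1 : HasDerivAt (fun v : ℝ => (v+2)⁻¹) (-(1/4)) 0 := by
    have := ((hasDerivAt_id (0:ℝ)).add_const 2).inv (by norm_num)
    refine this.congr_deriv ?_; symm
    norm_num
  have hB : HasDerivAt (fun v : ℝ => 1+(3/20)*v+b*v^2) (3/20) 0 := by
    have := (((hasDerivAt_id (0:ℝ)).const_mul (3/20:ℝ)).const_add 1).fun_add
      ((hasDerivAt_pow 2 (0:ℝ)).const_mul b)
    simpa using this
  have hr : HasDerivAt (fun v : ℝ => (1+(3/20)*v+b*v^2)^(-(2:ℝ)/3))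
      ((-(2:ℝ)/3) * (1:ℝ)^(-(2:ℝ)/3-1) * (3/20)) 0 := by
    have h := (Real.hasDerivAt_rpow_const (x := 1+(3/20)*(0:ℝ)+b*0^2) (p := -(2:ℝ)/3)
      (Or.inl (by norm_num))).comp (0:ℝ) hB
    have h2 : ((1:ℝ)+(3/20)*(0:ℝ)+b*0^2) = 1 := by norm_num
    rw [h2] at h
    simpa [Function.comp_def] using h
  have := h1.fun_sub (hr.const_mul (1/2 : ℝ))
  refine this.congr_deriv ?_; symm
  norm_num

lemma tendsto_FF (b : ℝ) :
    Tendsto (fun v : ℝ => ((v+2)⁻¹ - (1/2)*(1+(3/20)*v+b*v^2)^(-(2:ℝ)/3))/v)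
      (nhdsWithin 0 (Set.Ioi 0)) (nhds (-1/5)) := by
  have h := hasDerivAt_iff_tendsto_slope.1 (hasDerivAt_FF b)
  have h2 := h.mono_left (nhdsWithin_mono 0 (fun x hx => Set.mem_compl_singleton_iff.2 (ne_of_gt hx)))
  apply h2.congr
  intro v
  rw [slope_def_field]
  norm_num

lemma shift_tendsto : Tendsto (fun x : ℝ => x - 1)
    (nhdsWithin 1 (Set.Ioi 1)) (nhdsWithin 0 (Set.Ioi 0)) := by
  apply tendsto_nhdsWithin_of_tendsto_nhds_of_eventually_within
  · have h : Tendsto (fun x : ℝ => x - 1) (nhds 1) (nhds (1-1)) :=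
      (Continuous.tendsto (by continuity) 1)
    rw [show (1:ℝ)-1 = 0 by norm_num] at h
    exact h.mono_left nhdsWithin_le_nhds
  · filter_upwards [self_mem_nhdsWithin] with x hx
    simpa using hx

lemma rpow_split {v p : ℝ} (hv : 0 < v) (hp : 0 < p) :
    (Real.sqrt 2 * (v * Real.sqrt v * p)) ^ ((2:ℝ)/3)
      = (2:ℝ)^((1:ℝ)/3) * v * p^((2:ℝ)/3) := by
  have h32 : v * Real.sqrt v = v ^ ((3:ℝ)/2) := by
    rw [Real.sqrt_eq_rpow]
    rw [show (3:ℝ)/2 = 1 + 1/2 by norm_num, Real.rpow_add hv, Real.rpow_one]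
  rw [Real.sqrt_eq_rpow, h32]
  rw [show (2:ℝ)^((1:ℝ)/2) * (v ^ ((3:ℝ)/2) * p) = ((2:ℝ)^((1:ℝ)/2) * v ^ ((3:ℝ)/2)) * p by ring]
  rw [Real.mul_rpow (by positivity) hp.le, Real.mul_rpow (by positivity) (by positivity)]
  rw [← Real.rpow_mul (by norm_num : (0:ℝ) ≤ 2), ← Real.rpow_mul hv.le]
  norm_num

lemma ident {v p : ℝ} (hv : 0 < v) (hp : 0 < p) :
    1/(v*(v+2)) - (2:ℝ)^(-(2:ℝ)/3) / ((Real.sqrt 2 * (v * Real.sqrt v * p)) ^ ((2:ℝ)/3))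
      = ((v+2)⁻¹ - (1/2) * p^(-(2:ℝ)/3)) / v := by
  rw [rpow_split hv hp]
  rw [show (2:ℝ)^(-(2:ℝ)/3) = 2^((1:ℝ)/3)/2 by
    rw [show -(2:ℝ)/3 = 1/3 + (-1) by norm_num, Real.rpow_add two_pos, Real.rpow_neg_one]; ring]
  rw [show p ^ (-(2:ℝ)/3) = (p ^ ((2:ℝ)/3))⁻¹ by
    rw [show -(2:ℝ)/3 = -((2:ℝ)/3) by norm_num, Real.rpow_neg hp.le]]
  have h13 : (0:ℝ) < (2:ℝ)^((1:ℝ)/3) := by positivity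
  have hp23 : (0:ℝ) < p^((2:ℝ)/3) := by positivity
  field_simp

theorem tendsto_phi_coeff_one :
    Tendsto (fun x : ℝ => (phi x - (2 : ℝ) ^ (-(2 : ℝ) / 3)) / zeta x)
      (nhdsWithin 1 (Set.Ioi 1)) (nhds (-1 / 5)) := by
  have hcpos : (0:ℝ) < (2:ℝ)^(-(2:ℝ)/3) := by positivity
  have hlo : Tendsto (fun x : ℝ =>
      (((x-1)+2)⁻¹ - (1/2)*(1+(3/20)*(x-1)+(-(3/224))*(x-1)^2)^(-(2:ℝ)/3))/(x-1))
      (nhdsWithin 1 (Set.Ioi 1)) (nhds (-1/5)) :=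
    (tendsto_FF (-(3/224))).comp shift_tendsto
  have hhi : Tendsto (fun x : ℝ =>
      (((x-1)+2)⁻¹ - (1/2)*(1+(3/20)*(x-1)+(0:ℝ)*(x-1)^2)^(-(2:ℝ)/3))/(x-1))
      (nhdsWithin 1 (Set.Ioi 1)) (nhds (-1/5)) :=
    (tendsto_FF 0).comp shift_tendsto
  have hmem : Set.Ioo (1:ℝ) 2 ∈ nhdsWithin 1 (Set.Ioi 1) :=
    Ioo_mem_nhdsGT_of_mem ⟨le_refl 1, one_lt_two⟩
  rw [show (-1/5 : ℝ) = -1/5 by norm_num]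
  apply tendsto_of_tendsto_of_tendsto_of_le_of_le' hlo hhi
  · filter_upwards [hmem] with x hx
    obtain ⟨hx1, hx2⟩ := hx
    have hv : 0 < x - 1 := by linarith
    have hv1 : x - 1 < 1 := by linarith
    have hs : 0 < x^2 - 1 := sq_sub_pos hx1
    have hP : (0:ℝ) < 1 + (3/20)*(x-1) := by linarith
    have hQ : (0:ℝ) < 1 + (3/20)*(x-1) - (3/224)*(x-1)^2 := by nlinarith
    have hvs : 0 < (x-1) * Real.sqrt (x-1) := by positivity
    have hLpos : 0 < LL (x-1) := by
      unfold LL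
      have : (0:ℝ) < Real.sqrt 2 := by positivity
      exact mul_pos this (mul_pos hvs hQ)
    have hxmem : x ∈ Set.Icc (1:ℝ) 2 := ⟨hx1.le, hx2.le⟩
    have hgpos : 0 < gg x := lt_of_lt_of_le hLpos (LL_le_gg hxmem)
    have hzeq : zeta x = (gg x) ^ ((2:ℝ)/3) := rfl
    have hzpos : 0 < zeta x := by rw [hzeq]; positivity
    have hL23 : (LL (x-1)) ^ ((2:ℝ)/3) ≤ zeta x := by
      rw [hzeq]; exact Real.rpow_le_rpow hLpos.le (LL_le_gg hxmem) (by norm_num)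
    have hL23pos : 0 < (LL (x-1)) ^ ((2:ℝ)/3) := by positivity
    have hexpr : (phi x - (2:ℝ)^(-(2:ℝ)/3)) / zeta x = 1/(x^2-1) - (2:ℝ)^(-(2:ℝ)/3) / zeta x := by
      rw [phi]
      field_simp
      try ring
    rw [hexpr]
    have hstep : 1/(x^2-1) - (2:ℝ)^(-(2:ℝ)/3) / ((LL (x-1)) ^ ((2:ℝ)/3))
        ≤ 1/(x^2-1) - (2:ℝ)^(-(2:ℝ)/3) / zeta x := by
      have := div_le_div_of_nonneg_left hcpos.le hL23pos hL23
      linarith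
    have hid : 1/(x^2-1) - (2:ℝ)^(-(2:ℝ)/3) / ((LL (x-1)) ^ ((2:ℝ)/3))
        = (((x-1)+2)⁻¹ - (1/2)*(1+(3/20)*(x-1)+(-(3/224))*(x-1)^2)^(-(2:ℝ)/3))/(x-1) := by
      have hLL : LL (x-1) = Real.sqrt 2 * ((x-1) * Real.sqrt (x-1)
          * (1+(3/20)*(x-1)+(-(3/224))*(x-1)^2)) := by unfold LL; ring_nf
      have hQ' : (0:ℝ) < 1+(3/20)*(x-1)+(-(3/224))*(x-1)^2 := by nlinarith
      rw [hLL, show x^2-1 = (x-1)*((x-1)+2) by ring, ident hv hQ']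
    rw [← hid]
    exact hstep
  · filter_upwards [hmem] with x hx
    obtain ⟨hx1, hx2⟩ := hx
    have hv : 0 < x - 1 := by linarith
    have hs : 0 < x^2 - 1 := sq_sub_pos hx1
    have hP : (0:ℝ) < 1 + (3/20)*(x-1) := by linarith
    have hQ : (0:ℝ) < 1 + (3/20)*(x-1) - (3/224)*(x-1)^2 := by nlinarith
    have hvs : 0 < (x-1) * Real.sqrt (x-1) := by positivity
    have hLpos : 0 < LL (x-1) := by
      unfold LL
      have : (0:ℝ) < Real.sqrt 2 := by positivity
      exact mul_pos this (mul_pos hvs hQ)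
    have hxmem : x ∈ Set.Icc (1:ℝ) 2 := ⟨hx1.le, hx2.le⟩
    have hgpos : 0 < gg x := lt_of_lt_of_le hLpos (LL_le_gg hxmem)
    have hzeq : zeta x = (gg x) ^ ((2:ℝ)/3) := rfl
    have hzpos : 0 < zeta x := by rw [hzeq]; positivity
    have hU23 : zeta x ≤ (UU (x-1)) ^ ((2:ℝ)/3) := by
      rw [hzeq]; exact Real.rpow_le_rpow hgpos.le (gg_le_UU hxmem) (by norm_num)
    have hexpr : (phi x - (2:ℝ)^(-(2:ℝ)/3)) / zeta x = 1/(x^2-1) - (2:ℝ)^(-(2:ℝ)/3) / zeta x := by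
      rw [phi]
      field_simp
      try ring
    rw [hexpr]
    have hstep : 1/(x^2-1) - (2:ℝ)^(-(2:ℝ)/3) / zeta x
        ≤ 1/(x^2-1) - (2:ℝ)^(-(2:ℝ)/3) / ((UU (x-1)) ^ ((2:ℝ)/3)) := by
      have := div_le_div_of_nonneg_left hcpos.le hzpos hU23
      linarith
    have hid : 1/(x^2-1) - (2:ℝ)^(-(2:ℝ)/3) / ((UU (x-1)) ^ ((2:ℝ)/3))
        = (((x-1)+2)⁻¹ - (1/2)*(1+(3/20)*(x-1)+(0:ℝ)*(x-1)^2)^(-(2:ℝ)/3))/(x-1) := by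
      have hUU : UU (x-1) = Real.sqrt 2 * ((x-1) * Real.sqrt (x-1)
          * (1+(3/20)*(x-1)+(0:ℝ)*(x-1)^2)) := by unfold UU; ring_nf
      have hP' : (0:ℝ) < 1+(3/20)*(x-1)+(0:ℝ)*(x-1)^2 := by nlinarith
      rw [hUU, show x^2-1 = (x-1)*((x-1)+2) by ring, ident hv hP']
    rw [← hid]
    exact hstep
end

section
/- As x → 1 from the right, ( φ(x) − 2^{−2/3} + (1/5)·ζ(x) ) / ζ(x)² tends to 2^{5/3}/35, where φ(x) = ζ(x)/(x²−1) and ζ(x) = ( (3/4)·( x·√(x²−1) − arcosh x ) )^{2/3}. That is, the coefficient α₂ in the expansion φ = α₀ + α₁ζ + α₂ζ² + ⋯ equals 2^{5/3}/35. -/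
set_option maxHeartbeats 4000000

open Real Filter

lemma sinh_taylor {u : ℝ} (hu : |u| ≤ 1) :
    |Real.sinh u - (u + u^3/6 + u^5/120 + u^7/5040 + u^9/362880)| ≤ |u|^11 / 10^7 := by
  have h1 := Real.exp_bound hu (n := 11) (by norm_num)
  have h2 := Real.exp_bound (x := -u) (by rwa [abs_neg]) (n := 11) (by norm_num)
  rw [abs_neg] at h2
  norm_num [Finset.sum_range_succ, Nat.factorial] at h1 h2
  rw [Real.sinh_eq, abs_le] at *
  obtain ⟨h1a, h1b⟩ := h1
  obtain ⟨h2a, h2b⟩ := h2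
  constructor <;> nlinarith [pow_nonneg (abs_nonneg u) 11]

lemma cosh_taylor {u : ℝ} (hu : |u| ≤ 1) :
    |Real.cosh u - (1 + u^2/2 + u^4/24 + u^6/720 + u^8/40320 + u^10/3628800 + u^12/479001600)| ≤ |u|^13 / 10^9 := by
  have h1 := Real.exp_bound hu (n := 13) (by norm_num)
  have h2 := Real.exp_bound (x := -u) (by rwa [abs_neg]) (n := 13) (by norm_num)
  rw [abs_neg] at h2
  norm_num [Finset.sum_range_succ, Nat.factorial] at h1 h2
  rw [Real.cosh_eq, abs_le] at *
  obtain ⟨h1a, h1b⟩ := h1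
  obtain ⟨h2a, h2b⟩ := h2
  constructor <;> nlinarith [pow_nonneg (abs_nonneg u) 13]


lemma su_approx {u : ℝ} (h0 : 0 ≤ u) (h2 : u ≤ 1/2) :
    |Real.sinh u ^ 2 - (u^2 + u^4/3 + 2*u^6/45 + u^8/315 + 2*u^10/14175)| ≤ u^12 := by
  have habs : |2*u| ≤ 1 := by rw [abs_of_nonneg (by linarith)]; linarith
  have h := cosh_taylor habs
  rw [show |2*u| = 2*u from abs_of_nonneg (by linarith)] at h
  have hc : Real.cosh (2*u) = 2 * Real.sinh u ^ 2 + 1 := by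
    rw [Real.cosh_two_mul, Real.cosh_sq]; ring
  rw [hc] at h
  rw [abs_le] at h ⊢
  obtain ⟨ha, hb⟩ := h
  constructor <;>
    nlinarith [pow_nonneg h0 12, pow_nonneg h0 13, mul_le_mul_of_nonneg_left h2 (pow_nonneg h0 12)]

lemma wu_approx {u : ℝ} (h0 : 0 ≤ u) (h2 : u ≤ 1/2) :
    |3/8 * Real.sinh (2*u) - 3/4*u - (u^3/2 + u^5/10 + u^7/105 + u^9/1890)| ≤ u^11 := by
  have habs : |2*u| ≤ 1 := by rw [abs_of_nonneg (by linarith)]; linarith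
  have h := sinh_taylor habs
  rw [show |2*u| = 2*u from abs_of_nonneg (by linarith)] at h
  rw [abs_le] at h ⊢
  obtain ⟨ha, hb⟩ := h
  constructor <;> nlinarith [pow_nonneg h0 11]

private lemma powq {u : ℝ} (h0 : 0 ≤ u) (h2 : u^2 ≤ 1/4) (j : ℕ) : u^(j+2) ≤ u^j * (1/4) := by
  have h := pow_nonneg h0 j
  calc u^(j+2) = u^j * u^2 := pow_add u j 2
  _ ≤ u^j * (1/4) := by nlinarith

lemma core_poly {u s w : ℝ} (h0 : 0 < u) (h2 : u ≤ 1/2)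
    (hs : |s - (u^2 + u^4/3 + 2*u^6/45 + u^8/315 + 2*u^10/14175)| ≤ u^12)
    (hw : |w - (u^3/2 + u^5/10 + u^7/105 + u^9/1890)| ≤ u^11) :
    |4*w^2*(5 + s)^3 - 125*s^3 - 150/7*s^5| ≤ 2000*u^11 ∧
    |4*w^2 - s^3| ≤ 2*u^8 := by
  have hun : (0:ℝ) ≤ u := h0.le
  have hu2 : u^2 ≤ 1/4 := by nlinarith
  have e3 : u^3 ≤ u * (1/4) := by simpa using powq hun hu2 1
  have e4 : u^4 ≤ u^2 * (1/4) := by simpa using powq hun hu2 2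
  have e5 : u^5 ≤ u^3 * (1/4) := by simpa using powq hun hu2 3
  have e6 : u^6 ≤ u^4 * (1/4) := by simpa using powq hun hu2 4
  have e7 : u^7 ≤ u^5 * (1/4) := by simpa using powq hun hu2 5
  have e8 : u^8 ≤ u^6 * (1/4) := by simpa using powq hun hu2 6
  have e9 : u^9 ≤ u^7 * (1/4) := by simpa using powq hun hu2 7
  have e10 : u^10 ≤ u^8 * (1/4) := by simpa using powq hun hu2 8
  have e11 : u^11 ≤ u^9 * (1/4) := by simpa using powq hun hu2 9
  have e12 : u^12 ≤ u^10 * (1/4) := by simpa using powq hun hu2 10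
  have e14 : u^14 ≤ u^12 * (1/4) := by simpa using powq hun hu2 12
  have e16 : u^16 ≤ u^14 * (1/4) := by simpa using powq hun hu2 14
  have e18 : u^18 ≤ u^16 * (1/4) := by simpa using powq hun hu2 16
  have e20 : u^20 ≤ u^18 * (1/4) := by simpa using powq hun hu2 18
  have e12' : u^12 ≤ u^11 * (1/2) := by
    have h := pow_nonneg hun 11
    calc u^12 = u^11 * u := by ring
    _ ≤ u^11 * (1/2) := by nlinarith
  have hp2 := pow_nonneg hun 2
  have hp3 := pow_nonneg hun 3
  have hp4 := pow_nonneg hun 4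
  have hp5 := pow_nonneg hun 5
  have hp6 := pow_nonneg hun 6
  have hp7 := pow_nonneg hun 7
  have hp8 := pow_nonneg hun 8
  have hp9 := pow_nonneg hun 9
  have hp10 := pow_nonneg hun 10
  have hp11 := pow_nonneg hun 11
  have hp12 := pow_nonneg hun 12
  obtain ⟨hsa, hsb⟩ := abs_le.mp hs
  obtain ⟨hwa, hwb⟩ := abs_le.mp hw
  have hsu : s ≤ u^2 + u^4 := by linarith
  have hs0 : 0 ≤ s := by linarith
  have hshalf : s ≤ 1/2 := by linarith
  have hwu2 : w ≤ u^3 := by linarith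
  have hw0 : 0 ≤ w := by linarith
  have hw6 : w^2 ≤ u^6 := by nlinarith [hwu2, hw0, hp3]
  -- Step A : |s^2 - S₂| ≤ u^11
  have habs1 : |s + (u^2 + u^4/3 + 2*u^6/45 + u^8/315 + 2*u^10/14175)| ≤ 1 := by
    rw [abs_of_nonneg (by positivity)]; nlinarith
  have htailA : |(u^2 + u^4/3 + 2*u^6/45 + u^8/315 + 2*u^10/14175)^2
      - (u^4 + 2/3*u^6 + 1/5*u^8 + 34/945*u^10)| ≤ u^12 * (1/2) := by
    rw [show (u^2 + u^4/3 + 2*u^6/45 + u^8/315 + 2*u^10/14175)^2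
      - (u^4 + 2/3*u^6 + 1/5*u^8 + 34/945*u^10)
      = 62/14175*u^12 + 16/42525*u^14 + 101/4465125*u^16 + 4/4465125*u^18 + 4/200930625*u^20
      from by ring]
    rw [abs_of_nonneg (by positivity)]
    linarith only [e14, e16, e18, e20, hp12]
  have hA : |s^2 - (u^4 + 2/3*u^6 + 1/5*u^8 + 34/945*u^10)| ≤ u^11 := by
    have key : s^2 - (u^4 + 2/3*u^6 + 1/5*u^8 + 34/945*u^10)
        = (s - (u^2 + u^4/3 + 2*u^6/45 + u^8/315 + 2*u^10/14175))
            * (s + (u^2 + u^4/3 + 2*u^6/45 + u^8/315 + 2*u^10/14175))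
          + ((u^2 + u^4/3 + 2*u^6/45 + u^8/315 + 2*u^10/14175)^2
            - (u^4 + 2/3*u^6 + 1/5*u^8 + 34/945*u^10)) := by ring
    rw [key]
    calc |_ + _| ≤ |_| + |_| := abs_add_le _ _
    _ ≤ u^12 * 1 + u^12 * (1/2) :=
        add_le_add (by rw [abs_mul]; exact mul_le_mul hs habs1 (abs_nonneg _) hp12) htailA
    _ ≤ u^11 := by linarith
  obtain ⟨hAa, hAb⟩ := abs_le.mp hA
  have e9' : u^9 ≤ u^8 * (1/2) := by
    have h := pow_nonneg hun 8
    calc u^9 = u^8 * u := by ring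
    _ ≤ u^8 * (1/2) := by nlinarith
  have tri3 : ∀ a b c : ℝ, |a+b+c| ≤ |a|+|b|+|c| := by
    intro a b c
    calc |a+b+c| ≤ |a+b| + |c| := abs_add_le _ _
    _ ≤ |a|+|b|+|c| := by linarith [abs_add_le a b]
  have tri5 : ∀ a b c d e : ℝ, |a+b+c+d+e| ≤ |a|+|b|+|c|+|d|+|e| := by
    intro a b c d e
    calc |a+b+c+d+e| ≤ |a+b+c+d| + |e| := abs_add_le _ _
    _ ≤ |a+b+c| + |d| + |e| := by linarith [abs_add_le (a+b+c) d]
    _ ≤ |a|+|b|+|c|+|d|+|e| := by linarith [tri3 a b c]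
  have habss : |s| ≤ 1/2 := by rw [abs_of_nonneg hs0]; exact hshalf
  have habsS2 : |u^4 + 2/3*u^6 + 1/5*u^8 + 34/945*u^10| ≤ 1 := by
    rw [abs_of_nonneg (by positivity)]
    linarith only [hu2, e4, e6, e8, e10, hp2]
  have htailB : |(u^4 + 2/3*u^6 + 1/5*u^8 + 34/945*u^10)*(u^2 + u^4/3 + 2*u^6/45 + u^8/315 + 2*u^10/14175)
      - (u^6 + u^8 + 7/15*u^10)| ≤ u^12*(1/2) := by
    rw [show (u^4 + 2/3*u^6 + 1/5*u^8 + 34/945*u^10)*(u^2 + u^4/3 + 2*u^6/45 + u^8/315 + 2*u^10/14175)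
      - (u^6 + u^8 + 7/15*u^10)
      = 128/945*u^12 + 328/14175*u^14 + 11/4725*u^16 + 212/1488375*u^18 + 68/13395375*u^20
      from by ring]
    rw [abs_of_nonneg (by positivity)]
    linarith only [e14, e16, e18, e20, hp12]
  -- Step B
  have hB : |s^3 - (u^6 + u^8 + 7/15*u^10)| ≤ 2*u^11 := by
    rw [show s^3 - (u^6 + u^8 + 7/15*u^10)
        = (s^2 - (u^4 + 2/3*u^6 + 1/5*u^8 + 34/945*u^10))*s
        + (u^4 + 2/3*u^6 + 1/5*u^8 + 34/945*u^10)
            *(s - (u^2 + u^4/3 + 2*u^6/45 + u^8/315 + 2*u^10/14175))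
        + ((u^4 + 2/3*u^6 + 1/5*u^8 + 34/945*u^10)*(u^2 + u^4/3 + 2*u^6/45 + u^8/315 + 2*u^10/14175)
            - (u^6 + u^8 + 7/15*u^10)) from by ring]
    calc |_ + _ + _| ≤ |_| + |_| + |_| := tri3 _ _ _
    _ ≤ u^11 * (1/2) + 1 * u^12 + u^12*(1/2) := by
        refine add_le_add (add_le_add ?_ ?_) htailB
        · rw [abs_mul]; exact mul_le_mul hA habss (abs_nonneg _) hp11
        · rw [abs_mul]; exact mul_le_mul habsS2 hs (abs_nonneg _) zero_le_one
    _ ≤ 2*u^11 := by linarith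
  obtain ⟨hBa, hBb⟩ := abs_le.mp hB
  -- Step C
  have habss2 : |s^2| ≤ 1/4 := by
    rw [abs_of_nonneg (by positivity)]; nlinarith [hs0, hshalf]
  have habsP3 : |u^6 + u^8 + 7/15*u^10| ≤ 1 := by
    rw [abs_of_nonneg (by positivity)]
    linarith only [hu2, e4, e6, e8, e10, hp2]
  have htailC : |(u^6 + u^8 + 7/15*u^10)*(u^4 + 2/3*u^6 + 1/5*u^8 + 34/945*u^10) - u^10|
      ≤ u^12*3 := by
    rw [show (u^6 + u^8 + 7/15*u^10)*(u^4 + 2/3*u^6 + 1/5*u^8 + 34/945*u^10) - u^10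
      = 5/3*u^12 + 4/3*u^14 + 517/945*u^16 + 611/4725*u^18 + 34/2025*u^20
      from by ring]
    rw [abs_of_nonneg (by positivity)]
    linarith only [e14, e16, e18, e20, hp12]
  have hC : |s^5 - u^10| ≤ 3*u^11 := by
    rw [show s^5 - u^10
        = (s^3 - (u^6 + u^8 + 7/15*u^10))*s^2
        + (u^6 + u^8 + 7/15*u^10)*(s^2 - (u^4 + 2/3*u^6 + 1/5*u^8 + 34/945*u^10))
        + ((u^6 + u^8 + 7/15*u^10)*(u^4 + 2/3*u^6 + 1/5*u^8 + 34/945*u^10) - u^10) from by ring]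
    calc |_ + _ + _| ≤ |_| + |_| + |_| := tri3 _ _ _
    _ ≤ (2*u^11) * (1/4) + 1 * u^11 + u^12*3 := by
        refine add_le_add (add_le_add ?_ ?_) htailC
        · rw [abs_mul]; exact mul_le_mul hB habss2 (abs_nonneg _) (by positivity)
        · rw [abs_mul]; exact mul_le_mul habsP3 hA (abs_nonneg _) zero_le_one
    _ ≤ 3*u^11 := by linarith
  obtain ⟨hCa, hCb⟩ := abs_le.mp hC
  -- Step D
  have habswW : |w + (u^3/2 + u^5/10 + u^7/105 + u^9/1890)| ≤ 1 := by
    rw [abs_of_nonneg (by positivity)]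
    linarith
  have htailD : |(u^3/2 + u^5/10 + u^7/105 + u^9/1890)^2 - (u^6/4 + u^8/10 + 41/2100*u^10)|
      ≤ u^12*(1/2) := by
    rw [show (u^3/2 + u^5/10 + u^7/105 + u^9/1890)^2 - (u^6/4 + u^8/10 + 41/2100*u^10)
      = 23/9450*u^12 + 13/66150*u^14 + 1/99225*u^16 + 1/3572100*u^18
      from by ring]
    rw [abs_of_nonneg (by positivity)]
    linarith only [e14, e16, e18, hp12]
  have hD : |w^2 - (u^6/4 + u^8/10 + 41/2100*u^10)| ≤ 2*u^11 := by
    rw [show w^2 - (u^6/4 + u^8/10 + 41/2100*u^10)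
        = (w - (u^3/2 + u^5/10 + u^7/105 + u^9/1890))*(w + (u^3/2 + u^5/10 + u^7/105 + u^9/1890))
        + ((u^3/2 + u^5/10 + u^7/105 + u^9/1890)^2 - (u^6/4 + u^8/10 + 41/2100*u^10)) from by ring]
    calc |_ + _| ≤ |_| + |_| := abs_add_le _ _
    _ ≤ u^11 * 1 + u^12*(1/2) :=
        add_le_add (by rw [abs_mul]; exact mul_le_mul hw habswW (abs_nonneg _) hp11) htailD
    _ ≤ 2*u^11 := by linarith
  obtain ⟨hDa, hDb⟩ := abs_le.mp hD
  -- Step E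
  have hE1 : |s - (u^2 + u^4/3)| ≤ u^6 := by rw [abs_le]; constructor <;> linarith
  have hE2 : |s^2 - u^4| ≤ u^6 := by rw [abs_le]; constructor <;> linarith
  have hE3 : s^3 ≤ 2*u^6 := by
    have h := pow_le_pow_left₀ hs0 hsu 3
    linarith
  have hE : |(5+s)^3 - (125 + 75*u^2 + 40*u^4)| ≤ 100*u^6 := by
    rw [show (5+s)^3 - (125 + 75*u^2 + 40*u^4)
        = 75*(s - (u^2 + u^4/3)) + 15*(s^2 - u^4) + s^3 from by ring]
    calc |_ + _ + _| ≤ |_| + |_| + |_| := tri3 _ _ _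
    _ ≤ 75*u^6 + 15*u^6 + 2*u^6 := by
        refine add_le_add (add_le_add ?_ ?_) ?_
        · rw [abs_mul, abs_of_nonneg (by norm_num : (0:ℝ) ≤ 75)]
          exact mul_le_mul_of_nonneg_left hE1 (by norm_num)
        · rw [abs_mul, abs_of_nonneg (by norm_num : (0:ℝ) ≤ 15)]
          exact mul_le_mul_of_nonneg_left hE2 (by norm_num)
        · rw [abs_of_nonneg (by positivity)]; exact hE3
    _ ≤ 100*u^6 := by linarith
  -- Step F : assemble part 1
  constructor
  · rw [show 4*w^2*(5 + s)^3 - 125*s^3 - 150/7*s^5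
      = 4*w^2*((5+s)^3 - (125 + 75*u^2 + 40*u^4))
      + (4*(w^2 - (u^6/4 + u^8/10 + 41/2100*u^10)))*(125 + 75*u^2 + 40*u^4)
      + (4*(u^6/4 + u^8/10 + 41/2100*u^10)*(125 + 75*u^2 + 40*u^4)
          - 125*(u^6 + u^8 + 7/15*u^10) - 150/7*u^10)
      + (-125)*(s^3 - (u^6 + u^8 + 7/15*u^10))
      + (-(150/7))*(s^5 - u^10) from by ring]
    calc |_ + _ + _ + _ + _| ≤ |_| + |_| + |_| + |_| + |_| := tri5 _ _ _ _ _
    _ ≤ (4*u^6)*(100*u^6) + (4*(2*u^11))*147 + 23*u^12 + 125*(2*u^11) + (150/7)*(3*u^11) := by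
        refine add_le_add (add_le_add (add_le_add (add_le_add ?_ ?_) ?_) ?_) ?_
        · rw [abs_mul]
          refine mul_le_mul ?_ hE (abs_nonneg _) (by positivity)
          rw [abs_of_nonneg (by positivity)]; linarith
        · rw [abs_mul]
          refine mul_le_mul ?_ ?_ (abs_nonneg _) (by positivity)
          · rw [abs_mul, abs_of_nonneg (by norm_num : (0:ℝ) ≤ 4)]
            exact mul_le_mul_of_nonneg_left hD (by norm_num)
          · rw [abs_of_nonneg (by positivity)]; linarith
        · rw [show 4*(u^6/4 + u^8/10 + 41/2100*u^10)*(125 + 75*u^2 + 40*u^4)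
              - 125*(u^6 + u^8 + 7/15*u^10) - 150/7*u^10
              = 153/7*u^12 + 328/105*u^14 from by ring]
          rw [abs_of_nonneg (by positivity)]
          linarith
        · rw [abs_mul, (by norm_num : |(-125:ℝ)| = 125)]
          exact mul_le_mul_of_nonneg_left hB (by norm_num)
        · rw [abs_mul, (by norm_num : |(-(150/7):ℝ)| = 150/7)]
          exact mul_le_mul_of_nonneg_left hC (by norm_num)
    _ ≤ 2000*u^11 := by linarith
  -- part 2
  · rw [show 4*w^2 - s^3
      = 4*(w^2 - (u^6/4 + u^8/10 + 41/2100*u^10))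
      + (-1)*(s^3 - (u^6 + u^8 + 7/15*u^10))
      + (-(3/5)*u^8 - 204/525*u^10) from by ring]
    calc |_ + _ + _| ≤ |_| + |_| + |_| := tri3 _ _ _
    _ ≤ 4*(2*u^11) + 1*(2*u^11) + (3/5*u^8 + 204/525*u^10) := by
        refine add_le_add (add_le_add ?_ ?_) ?_
        · rw [abs_mul, (by norm_num : |(4:ℝ)| = 4)]
          exact mul_le_mul_of_nonneg_left hD (by norm_num)
        · rw [abs_mul, (by norm_num : |(-1:ℝ)| = 1)]
          exact mul_le_mul_of_nonneg_left hB (by norm_num)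
        · rw [abs_le]; constructor <;> linarith
    _ ≤ 2*u^8 := by linarith

lemma squeeze_aux {f : ℝ → ℝ} {L : ℝ} (C : ℝ)
    (h : ∀ u ∈ Set.Ioo (0:ℝ) (1/2), |f u - L| ≤ C*u) (hC : 0 < C) :
    Tendsto f (nhdsWithin 0 (Set.Ioi 0)) (nhds L) := by
  have hev : Set.Ioo (0:ℝ) (1/2) ∈ nhdsWithin (0:ℝ) (Set.Ioi 0) :=
    Ioo_mem_nhdsGT_of_mem ⟨le_refl 0, by norm_num⟩
  have hCu : Tendsto (fun u : ℝ => C*u) (nhdsWithin 0 (Set.Ioi 0)) (nhds 0) := by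
    have h : Tendsto (fun u : ℝ => C*u) (nhds 0) (nhds (C*0)) := ((continuous_const.mul continuous_id : Continuous fun u : ℝ => C*u)).tendsto (0:ℝ)
    simp only [mul_zero] at h
    exact h.mono_left nhdsWithin_le_nhds
  refine tendsto_of_tendsto_of_tendsto_of_le_of_le'
    (g := fun u => L - C*u) (h := fun u => L + C*u) ?_ ?_ ?_ ?_
  · simpa using tendsto_const_nhds.sub hCu
  · simpa using tendsto_const_nhds.add hCu
  · filter_upwards [hev] with u hu
    have := abs_le.mp (h u hu); linarith [this.1]
  · filter_upwards [hev] with u hu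
    have := abs_le.mp (h u hu); linarith [this.2]

lemma Ku_tendsto : Tendsto (fun u : ℝ =>
      (4*(3/8 * Real.sinh (2*u) - 3/4*u)^2*(5 + Real.sinh u^2)^3 - 125*(Real.sinh u^2)^3)
        / (125*(Real.sinh u^2)^5))
    (nhdsWithin 0 (Set.Ioi 0)) (nhds (6/35)) := by
  apply squeeze_aux 16 _ (by norm_num)
  intro u hu
  obtain ⟨h0, h2⟩ := hu
  obtain ⟨hN, -⟩ := core_poly h0 h2.le (su_approx h0.le h2.le) (wu_approx h0.le h2.le)
  have hsp : 0 < Real.sinh u := Real.sinh_pos_iff.mpr h0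
  have hsl : u^2 ≤ Real.sinh u ^ 2 := by nlinarith [Real.self_lt_sinh_iff.mpr h0]
  have hs0 : (0:ℝ) < Real.sinh u ^ 2 := by positivity
  have hs5 : u^10 ≤ (Real.sinh u^2)^5 := by
    calc u^10 = (u^2)^5 := by ring
    _ ≤ (Real.sinh u^2)^5 := pow_le_pow_left₀ (by positivity) hsl 5
  have hden : (0:ℝ) < 125*(Real.sinh u^2)^5 := by positivity
  have heq : (4*(3/8 * Real.sinh (2*u) - 3/4*u)^2*(5 + Real.sinh u^2)^3 - 125*(Real.sinh u^2)^3)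
        / (125*(Real.sinh u^2)^5) - 6/35
      = (4*(3/8 * Real.sinh (2*u) - 3/4*u)^2*(5 + Real.sinh u^2)^3 - 125*(Real.sinh u^2)^3
          - 150/7*(Real.sinh u^2)^5) / (125*(Real.sinh u^2)^5) := by
    field_simp
    ring
  rw [heq, abs_div, abs_of_pos hden, div_le_iff₀ hden]
  calc |4*(3/8 * Real.sinh (2*u) - 3/4*u)^2*(5 + Real.sinh u^2)^3 - 125*(Real.sinh u^2)^3
          - 150/7*(Real.sinh u^2)^5| ≤ 2000*u^11 := hN
  _ ≤ 16*u*(125*(Real.sinh u^2)^5) := by nlinarith [mul_le_mul_of_nonneg_left hs5 h0.le]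

lemma Mu_tendsto : Tendsto (fun u : ℝ =>
      (3/8 * Real.sinh (2*u) - 3/4*u)^2 / (Real.sinh u^2)^3)
    (nhdsWithin 0 (Set.Ioi 0)) (nhds (1/4)) := by
  apply squeeze_aux 1 _ (by norm_num)
  intro u hu
  obtain ⟨h0, h2⟩ := hu
  obtain ⟨-, hG⟩ := core_poly h0 h2.le (su_approx h0.le h2.le) (wu_approx h0.le h2.le)
  have hsp : 0 < Real.sinh u := Real.sinh_pos_iff.mpr h0
  have hsl : u^2 ≤ Real.sinh u ^ 2 := by nlinarith [Real.self_lt_sinh_iff.mpr h0]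
  have hs0 : (0:ℝ) < Real.sinh u ^ 2 := by positivity
  have hs3 : u^6 ≤ (Real.sinh u^2)^3 := by
    calc u^6 = (u^2)^3 := by ring
    _ ≤ (Real.sinh u^2)^3 := pow_le_pow_left₀ (by positivity) hsl 3
  have hden : (0:ℝ) < 4*(Real.sinh u^2)^3 := by positivity
  have heq : (3/8 * Real.sinh (2*u) - 3/4*u)^2 / (Real.sinh u^2)^3 - 1/4
      = (4*(3/8 * Real.sinh (2*u) - 3/4*u)^2 - (Real.sinh u^2)^3) / (4*(Real.sinh u^2)^3) := by
    field_simp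
  rw [heq, abs_div, abs_of_pos hden, div_le_iff₀ hden]
  calc |4*(3/8 * Real.sinh (2*u) - 3/4*u)^2 - (Real.sinh u^2)^3| ≤ 2*u^8 := hG
  _ ≤ 1*u*(4*(Real.sinh u^2)^3) := by nlinarith [mul_le_mul_of_nonneg_left hs3 h0.le, h2, pow_nonneg h0.le 7, pow_nonneg h0.le 8]

lemma arcosh_props {x : ℝ} (hx : 1 < x) :
    0 < _root_.arcosh x ∧ Real.cosh (_root_.arcosh x) = x ∧ Real.sinh (_root_.arcosh x) = Real.sqrt (x^2-1) := by
  have hs2 : (0:ℝ) < x^2 - 1 := by nlinarith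
  have hsq : 0 < Real.sqrt (x^2-1) := Real.sqrt_pos.mpr hs2
  have hy : 1 < x + Real.sqrt (x^2-1) := by linarith
  have hy0 : 0 < x + Real.sqrt (x^2-1) := by linarith
  have hmul : (x + Real.sqrt (x^2-1)) * (x - Real.sqrt (x^2-1)) = 1 := by
    have h := Real.sq_sqrt hs2.le
    nlinarith [h]
  have hinv : (x + Real.sqrt (x^2-1))⁻¹ = x - Real.sqrt (x^2-1) :=
    inv_eq_of_mul_eq_one_right hmul
  have harc : _root_.arcosh x = Real.log (x + Real.sqrt (x^2-1)) := rfl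
  refine ⟨?_, ?_, ?_⟩
  · rw [harc]; exact Real.log_pos hy
  · rw [harc, Real.cosh_eq, Real.exp_log hy0, Real.exp_neg, Real.exp_log hy0, hinv]; ring
  · rw [harc, Real.sinh_eq, Real.exp_log hy0, Real.exp_neg, Real.exp_log hy0, hinv]; ring

lemma arcosh_tendsto : Tendsto _root_.arcosh (nhdsWithin 1 (Set.Ioi 1)) (nhdsWithin 0 (Set.Ioi 0)) := by
  rw [tendsto_nhdsWithin_iff]
  constructor
  · have hc : ContinuousAt _root_.arcosh 1 := by
      apply ContinuousAt.log
      · exact (continuous_id.add (Real.continuous_sqrt.comp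
          ((continuous_pow 2).sub continuous_const))).continuousAt
      · norm_num
    have h0 : _root_.arcosh 1 = 0 := by simp [_root_.arcosh]
    have := hc.tendsto
    rw [h0] at this
    exact this.mono_left nhdsWithin_le_nhds
  · exact eventually_mem_nhdsWithin.mono fun x hx => (arcosh_props hx).1

lemma KX_tendsto : Tendsto (fun x : ℝ =>
      (4*((3/4) * (x * Real.sqrt (x^2-1) - _root_.arcosh x))^2*(5 + (x^2-1))^3 - 125*(x^2-1)^3)
        / (125*(x^2-1)^5))
    (nhdsWithin 1 (Set.Ioi 1)) (nhds (6/35)) := by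
  have h := Ku_tendsto.comp arcosh_tendsto
  apply h.congr'
  filter_upwards [eventually_mem_nhdsWithin] with x hx
  have hx1 : (1:ℝ) < x := hx
  obtain ⟨h0, hcosh, hsinh⟩ := arcosh_props hx1
  have hs2 : (0:ℝ) ≤ x^2 - 1 := by nlinarith
  simp only [Function.comp_apply]
  rw [Real.sinh_two_mul, hcosh, hsinh, Real.sq_sqrt hs2]
  ring_nf

lemma MX_tendsto : Tendsto (fun x : ℝ =>
      ((3/4) * (x * Real.sqrt (x^2-1) - _root_.arcosh x))^2 / (x^2-1)^3)
    (nhdsWithin 1 (Set.Ioi 1)) (nhds (1/4)) := by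
  have h := Mu_tendsto.comp arcosh_tendsto
  apply h.congr'
  filter_upwards [eventually_mem_nhdsWithin] with x hx
  have hx1 : (1:ℝ) < x := hx
  obtain ⟨h0, hcosh, hsinh⟩ := arcosh_props hx1
  have hs2 : (0:ℝ) ≤ x^2 - 1 := by nlinarith
  simp only [Function.comp_apply]
  rw [Real.sinh_two_mul, hcosh, hsinh, Real.sq_sqrt hs2]
  ring_nf

lemma identity_pt {x : ℝ} (hx : 1 < x) :
    (phi x - (2:ℝ)^(-(2:ℝ)/3) + (1/5)*zeta x)/zeta x^2
      = (2:ℝ)^(-(2:ℝ)/3)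
        * ((4*((3/4) * (x * Real.sqrt (x^2-1) - _root_.arcosh x))^2*(5 + (x^2-1))^3 - 125*(x^2-1)^3)
            /(125*(x^2-1)^5))
        * ((((3/4) * (x * Real.sqrt (x^2-1) - _root_.arcosh x))^2/(x^2-1)^3) ^ ((2:ℝ)/3))⁻¹
        * (((((3/4) * (x * Real.sqrt (x^2-1) - _root_.arcosh x))^2/(x^2-1)^3 * (4*(5+(x^2-1))^3/125))
              ^ ((1:ℝ)/3))^2
           + (((3/4) * (x * Real.sqrt (x^2-1) - _root_.arcosh x))^2/(x^2-1)^3 * (4*(5+(x^2-1))^3/125))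
              ^ ((1:ℝ)/3) + 1)⁻¹ := by
  obtain ⟨hu0, hcosh, hsinh⟩ := arcosh_props hx
  have hs0 : (0:ℝ) < x^2 - 1 := by nlinarith
  have h2u : 2*_root_.arcosh x < Real.sinh (2*_root_.arcosh x) := Real.self_lt_sinh_iff.mpr (by linarith)
  rw [Real.sinh_two_mul] at h2u
  have hxs : x * Real.sqrt (x^2-1) = Real.sinh (_root_.arcosh x) * Real.cosh (_root_.arcosh x) := by
    rw [hcosh, hsinh]; ring
  have hw0 : (0:ℝ) < (3/4) * (x * Real.sqrt (x^2-1) - _root_.arcosh x) := by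
    rw [hxs]; linarith
  -- abbreviations
  set w := (3/4) * (x * Real.sqrt (x^2-1) - _root_.arcosh x) with hwdef
  set s := x^2 - 1 with hsdef
  set r := w^2/s^3 * (4*(5+s)^3/125) with hrdef
  set c := (2:ℝ)^(-(2:ℝ)/3) with hcdef
  have hr0 : (0:ℝ) < r := by positivity
  set a := r ^ ((1:ℝ)/3) with hadef
  have ha0 : 0 < a := Real.rpow_pos_of_pos hr0 _
  have ha3 : a^3 = r := by
    rw [hadef, show (1:ℝ)/3 = ((3:ℕ):ℝ)⁻¹ by norm_num]
    exact Real.rpow_inv_natCast_pow hr0.le (by norm_num)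
  have hz : zeta x = w ^ ((2:ℝ)/3) := by
    rw [zeta, hwdef, hsdef]
  have hz1 : zeta x = (w^2) ^ ((1:ℝ)/3) := by
    rw [hz, ← Real.rpow_natCast w 2, ← Real.rpow_mul hw0.le]
    norm_num
  have hzpos : 0 < zeta x := by
    rw [hz1]; exact Real.rpow_pos_of_pos (by positivity) _
  have hA : ((w^2:ℝ)) ^ ((2:ℝ)/3) = zeta x ^ 2 := by
    rw [hz1, ← Real.rpow_natCast ((w^2) ^ ((1:ℝ)/3)) 2, ← Real.rpow_mul (by positivity)]
    norm_num
  have hB : ((s^3:ℝ)) ^ ((2:ℝ)/3) = s^2 := by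
    rw [← Real.rpow_natCast s 3, ← Real.rpow_mul hs0.le,
      show ((3:ℕ):ℝ)*(2/3) = ((2:ℕ):ℝ) by push_cast; norm_num, Real.rpow_natCast]
  have hz2 : zeta x^2 = (w^2/s^3) ^ ((2:ℝ)/3) * s^2 := by
    rw [Real.div_rpow (by positivity) (by positivity), hA, hB]
    field_simp
  have h43 : (4:ℝ) ^ ((1:ℝ)/3) = 2 ^ ((2:ℝ)/3) := by
    rw [show (4:ℝ) = 2^(2:ℕ) by norm_num, ← Real.rpow_natCast 2 2, ← Real.rpow_mul (by norm_num)]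
    norm_num
  have hcinv : c = ((2:ℝ) ^ ((2:ℝ)/3))⁻¹ := by
    rw [hcdef, show -(2:ℝ)/3 = -((2:ℝ)/3) by ring, Real.rpow_neg (by norm_num)]
  have h5 : zeta x * ((5+s)/(5*s)) = c * a := by
    have hq : ((5+s)/(5*s)) = (((5+s)/(5*s))^3) ^ ((1:ℝ)/3) := by
      rw [show (1:ℝ)/3 = ((3:ℕ):ℝ)⁻¹ by norm_num,
        Real.pow_rpow_inv_natCast (by positivity) (by norm_num)]
    rw [hz1, hq, ← Real.mul_rpow (by positivity) (by positivity)]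
    rw [show w^2 * ((5+s)/(5*s))^3 = r/4 from by rw [hrdef]; field_simp; ring]
    rw [Real.div_rpow hr0.le (by norm_num), h43, hcinv, ← hadef]
    ring
  have hnum : phi x - c + (1/5)*zeta x = c * (a - 1) := by
    have hphi : phi x = zeta x / s := by rw [phi, hsdef]
    have h6 : zeta x / s + (1/5)*zeta x = zeta x * ((5+s)/(5*s)) := by
      field_simp
    rw [hphi]
    have h7 : zeta x / s + (1/5)*zeta x = c * a := by rw [h6, h5]
    linear_combination h7
  have hfin2 : (a-1)*(a^2+a+1)*(125*s^5) = (4*w^2*(5+s)^3 - 125*s^3)*s^2 := by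
    have har : (a-1)*(a^2+a+1) = r - 1 := by rw [← ha3]; ring
    rw [har, hrdef]
    field_simp
  have hM0 : (0:ℝ) < (w^2/s^3) ^ ((2:ℝ)/3) := Real.rpow_pos_of_pos (by positivity) _
  have hsum0 : (0:ℝ) < a^2+a+1 := by positivity
  rw [hnum, hz2]
  rw [div_eq_iff (by positivity : ((w^2/s^3) ^ ((2:ℝ)/3) * s^2) ≠ 0)]
  rw [show 4*w^2*(5+s)^3 - 125*s^3 = (a-1)*(a^2+a+1)*(125*s^5)/s^2 by
    rw [hfin2]; field_simp]
  field_simp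

theorem tendsto_phi_coeff_two :
    Tendsto (fun x : ℝ =>
        (phi x - (2 : ℝ) ^ (-(2 : ℝ) / 3) + (1 / 5) * zeta x) / zeta x ^ 2)
      (nhdsWithin 1 (Set.Ioi 1)) (nhds ((2 : ℝ) ^ ((5 : ℝ) / 3) / 35)) := by
  have hcont : Tendsto (fun x : ℝ => 4*(5+(x^2-1))^3/125) (nhdsWithin 1 (Set.Ioi 1)) (nhds 4) := by
    have hc : Continuous fun x : ℝ => 4*(5+(x^2-1))^3/125 := by continuity
    have h := hc.tendsto 1
    norm_num at h
    exact h.mono_left nhdsWithin_le_nhds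
  have hr : Tendsto (fun x : ℝ =>
      ((3/4) * (x * Real.sqrt (x^2-1) - _root_.arcosh x))^2/(x^2-1)^3 * (4*(5+(x^2-1))^3/125))
      (nhdsWithin 1 (Set.Ioi 1)) (nhds 1) := by
    have h := MX_tendsto.mul hcont
    norm_num at h
    exact h
  have ha : Tendsto (fun x : ℝ =>
      (((3/4) * (x * Real.sqrt (x^2-1) - _root_.arcosh x))^2/(x^2-1)^3 * (4*(5+(x^2-1))^3/125))
        ^ ((1:ℝ)/3))
      (nhdsWithin 1 (Set.Ioi 1)) (nhds 1) := by
    have h := hr.rpow_const (Or.inr (by norm_num : (0:ℝ) ≤ 1/3))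
    simpa using h
  have hsum : Tendsto (fun x : ℝ =>
      ((((3/4) * (x * Real.sqrt (x^2-1) - _root_.arcosh x))^2/(x^2-1)^3 * (4*(5+(x^2-1))^3/125))
          ^ ((1:ℝ)/3))^2
      + (((3/4) * (x * Real.sqrt (x^2-1) - _root_.arcosh x))^2/(x^2-1)^3 * (4*(5+(x^2-1))^3/125))
          ^ ((1:ℝ)/3) + 1)
      (nhdsWithin 1 (Set.Ioi 1)) (nhds 3) := by
    have h := ((ha.pow 2).add ha).add (tendsto_const_nhds (x := (1:ℝ)))
    norm_num at h
    exact h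
  have hM23 : Tendsto (fun x : ℝ =>
      (((3/4) * (x * Real.sqrt (x^2-1) - _root_.arcosh x))^2/(x^2-1)^3) ^ ((2:ℝ)/3))
      (nhdsWithin 1 (Set.Ioi 1)) (nhds (((1/4):ℝ) ^ ((2:ℝ)/3))) :=
    MX_tendsto.rpow_const (Or.inr (by norm_num : (0:ℝ) ≤ 2/3))
  have hM23ne : (((1/4):ℝ) ^ ((2:ℝ)/3)) ≠ 0 := (Real.rpow_pos_of_pos (by norm_num) _).ne'
  have hg := ((tendsto_const_nhds (x := (2:ℝ)^(-(2:ℝ)/3)) |>.mul KX_tendsto).mul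
      (hM23.inv₀ hM23ne)).mul (hsum.inv₀ (by norm_num))
  have h24 : (2:ℝ) ^ ((2:ℝ)) = 4 := by
    rw [show ((2:ℝ)) = ((2:ℕ):ℝ) by norm_num, Real.rpow_natCast]; norm_num
  have h14 : ((1/4):ℝ) ^ ((2:ℝ)/3) = 2 ^ (-(4:ℝ)/3) := by
    rw [show (1/4:ℝ) = (2:ℝ) ^ (-(2:ℝ)) by rw [Real.rpow_neg (by norm_num), h24]; norm_num,
      ← Real.rpow_mul (by norm_num)]
    norm_num
  have hinv43 : ((2:ℝ) ^ (-(4:ℝ)/3))⁻¹ = 2 ^ ((4:ℝ)/3) := by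
    rw [show -(4:ℝ)/3 = -((4:ℝ)/3) by ring, Real.rpow_neg (by norm_num), inv_inv]
  have h2r : (2:ℝ)^(-(2:ℝ)/3) * (2:ℝ)^((4:ℝ)/3) = 2^((2:ℝ)/3) := by
    rw [← Real.rpow_add (by norm_num)]; norm_num
  have h53 : (2:ℝ)^((5:ℝ)/3) = 2 * 2^((2:ℝ)/3) := by
    rw [show (5:ℝ)/3 = 1 + 2/3 by norm_num, Real.rpow_add (by norm_num), Real.rpow_one]
  have hval : (2:ℝ)^(-(2:ℝ)/3) * (6/35) * (((1/4):ℝ) ^ ((2:ℝ)/3))⁻¹ * (3:ℝ)⁻¹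
      = (2:ℝ) ^ ((5:ℝ)/3) / 35 := by
    rw [h14, hinv43, h53]
    linear_combination (6/35) * (3:ℝ)⁻¹ * h2r
  rw [← hval]
  apply hg.congr'
  filter_upwards [eventually_mem_nhdsWithin] with x hx
  exact (identity_pt hx).symm
end

section
/- As x → 1 from the right, ( x − 1 − 2^{−1/3}·ζ(x) ) / ζ(x)² tends to −2^{−2/3}/10, where ζ(x) = ( (3/4)·( x·√(x²−1) − arcosh x ) )^{2/3}. That is, the inversion of ζ as a function of x begins x = 1 + 2^{−1/3}ζ − (2^{−2/3}/10)ζ² + ⋯ . -/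
open Real Filter

open Topology

namespace InversionAux

noncomputable def F (x : ℝ) : ℝ := x * Real.sqrt (x ^ 2 - 1) - _root_.arcosh x
noncomputable def G (x : ℝ) : ℝ := (3/4) * F x - Real.sqrt 2 * ((x - 1) * Real.sqrt (x - 1))
noncomputable def psi (x : ℝ) : ℝ := (3/4) * F x / (Real.sqrt 2 * ((x - 1) * Real.sqrt (x - 1)))

lemma sq_sub_pos {x : ℝ} (hx : 1 < x) : 0 < x ^ 2 - 1 := by nlinarith

lemma sqrt_sq_sub {x : ℝ} (hx : 1 < x) : Real.sqrt (x ^ 2 - 1) ^ 2 = x ^ 2 - 1 :=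
  Real.sq_sqrt (sq_sub_pos hx).le

lemma hasDerivAt_F {x : ℝ} (hx : 1 < x) :
    HasDerivAt F (2 * Real.sqrt (x ^ 2 - 1)) x := by
  have h1 : (0:ℝ) < x ^ 2 - 1 := sq_sub_pos hx
  have hs : (0:ℝ) < Real.sqrt (x ^ 2 - 1) := Real.sqrt_pos.mpr h1
  have hsq : HasDerivAt (fun y : ℝ => y ^ 2 - 1) (2 * x) x := by
    simpa using ((hasDerivAt_pow 2 x).sub_const 1)
  have hroot : HasDerivAt (fun y : ℝ => Real.sqrt (y ^ 2 - 1))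
      (x / Real.sqrt (x ^ 2 - 1)) x := by
    have := (Real.hasDerivAt_sqrt h1.ne').comp x hsq
    refine this.congr_deriv ?_
    field_simp
  have hprod : HasDerivAt (fun y : ℝ => y * Real.sqrt (y ^ 2 - 1))
      (Real.sqrt (x ^ 2 - 1) + x * (x / Real.sqrt (x ^ 2 - 1))) x := by
    simpa [one_mul, Pi.mul_def] using (hasDerivAt_id' x).mul hroot
  have harg : HasDerivAt (fun y : ℝ => y + Real.sqrt (y ^ 2 - 1))
      (1 + x / Real.sqrt (x ^ 2 - 1)) x := (hasDerivAt_id x).add hroot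
  have hargpos : (0:ℝ) < x + Real.sqrt (x ^ 2 - 1) := by positivity
  have hlog : HasDerivAt _root_.arcosh
      ((1 + x / Real.sqrt (x ^ 2 - 1)) / (x + Real.sqrt (x ^ 2 - 1))) x :=
    harg.log hargpos.ne'
  have hlog' : (1 + x / Real.sqrt (x ^ 2 - 1)) / (x + Real.sqrt (x ^ 2 - 1))
      = 1 / Real.sqrt (x ^ 2 - 1) := by
    rw [div_eq_div_iff hargpos.ne' hs.ne']
    have := sqrt_sq_sub hx
    field_simp
    nlinarith [this]
  have := hprod.sub (hlog' ▸ hlog)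
  refine this.congr_deriv ?_
  have h2 := sqrt_sq_sub hx
  field_simp
  nlinarith [h2]

lemma F_one : F 1 = 0 := by
  simp [F, _root_.arcosh]

lemma contF : ContinuousOn F (Set.Ici 1) := by
  have hc : Continuous fun y : ℝ => y + Real.sqrt (y ^ 2 - 1) := by
    continuity
  have h1 : ContinuousOn _root_.arcosh (Set.Ici 1) := by
    apply ContinuousOn.log hc.continuousOn
    intro x hx
    have hx1 : (1:ℝ) ≤ x := hx
    have : (0:ℝ) ≤ Real.sqrt (x ^ 2 - 1) := Real.sqrt_nonneg _
    positivity
  exact (ContinuousOn.mul continuousOn_id (by fun_prop)).sub h1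

lemma hasDerivAt_p {x : ℝ} (hx : 1 < x) :
    HasDerivAt (fun y : ℝ => (y - 1) * Real.sqrt (y - 1))
      ((3/2) * Real.sqrt (x - 1)) x := by
  have h1 : (0:ℝ) < x - 1 := by linarith
  have hs : (0:ℝ) < Real.sqrt (x - 1) := Real.sqrt_pos.mpr h1
  have hlin : HasDerivAt (fun y : ℝ => y - 1) 1 x := (hasDerivAt_id x).sub_const 1
  have hroot : HasDerivAt (fun y : ℝ => Real.sqrt (y - 1)) (1 / (2 * Real.sqrt (x - 1))) x := by
    simpa [Function.comp_def] using (Real.hasDerivAt_sqrt h1.ne').comp x hlin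
  have := hlin.mul hroot
  refine this.congr_deriv ?_
  have h2 : Real.sqrt (x - 1) ^ 2 = x - 1 := Real.sq_sqrt h1.le
  field_simp
  nlinarith [h2]

lemma hasDerivAt_q {x : ℝ} (hx : 1 < x) :
    HasDerivAt (fun y : ℝ => (y - 1) ^ 2 * Real.sqrt (y - 1))
      ((5/2) * ((x - 1) * Real.sqrt (x - 1))) x := by
  have h1 : (0:ℝ) < x - 1 := by linarith
  have hs : (0:ℝ) < Real.sqrt (x - 1) := Real.sqrt_pos.mpr h1
  have hlin : HasDerivAt (fun y : ℝ => y - 1) 1 x := (hasDerivAt_id x).sub_const 1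
  have hsq : HasDerivAt (fun y : ℝ => (y - 1) ^ 2) (2 * (x - 1)) x := by
    have := (hasDerivAt_pow 2 (x - 1)).comp x hlin
    simpa [Function.comp_def] using this
  have hroot : HasDerivAt (fun y : ℝ => Real.sqrt (y - 1)) (1 / (2 * Real.sqrt (x - 1))) x := by
    simpa [Function.comp_def] using (Real.hasDerivAt_sqrt h1.ne').comp x hlin
  have := hsq.mul hroot
  refine this.congr_deriv ?_
  have h2 : Real.sqrt (x - 1) ^ 2 = x - 1 := Real.sq_sqrt h1.le
  field_simp
  nlinarith [h2]

lemma sqrt_factor {x : ℝ} (hx : 1 ≤ x) :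
    Real.sqrt (x ^ 2 - 1) = Real.sqrt (x - 1) * Real.sqrt (x + 1) := by
  rw [← Real.sqrt_mul (by linarith)]
  ring_nf

lemma G_pos {x : ℝ} (hx : 1 < x) : 0 < G x := by
  have hmono : StrictMonoOn G (Set.Ici 1) := by
    apply strictMonoOn_of_deriv_pos (convex_Ici 1)
    · apply ContinuousOn.sub (contF.const_smul ((3:ℝ)/4) |>.congr ?_) (by fun_prop)
      intro y _; simp [smul_eq_mul]
    · intro y hy
      rw [interior_Ici] at hy
      have hy1 : (1:ℝ) < y := hy
      have hd : HasDerivAt G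
          ((3/4) * (2 * Real.sqrt (y ^ 2 - 1)) - Real.sqrt 2 * ((3/2) * Real.sqrt (y - 1))) y :=
        ((hasDerivAt_F hy1).const_mul _).sub ((hasDerivAt_p hy1).const_mul _)
      rw [hd.deriv]
      rw [sqrt_factor hy1.le]
      have h2 : Real.sqrt 2 < Real.sqrt (y + 1) := by
        apply Real.sqrt_lt_sqrt (by norm_num); linarith
      have hs : (0:ℝ) < Real.sqrt (y - 1) := Real.sqrt_pos.mpr (by linarith)
      nlinarith
  have := hmono (Set.self_mem_Ici) (le_of_lt hx : (1:ℝ) ≤ x) hx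
  simpa [G, F_one] using this

lemma slope_lim :
    Tendsto (fun y : ℝ => (Real.sqrt (y + 1) - Real.sqrt 2) / (y - 1)) (𝓝[>] 1)
      (𝓝 (1 / (2 * Real.sqrt 2))) := by
  have hd : HasDerivAt (fun y : ℝ => Real.sqrt (y + 1)) (1 / (2 * Real.sqrt 2)) 1 := by
    have hlin : HasDerivAt (fun y : ℝ => y + 1) 1 1 := (hasDerivAt_id 1).add_const 1
    have := hlin.sqrt (by norm_num)
    norm_num at this
    convert this using 1
    rw [eq_comm, inv_mul_eq_div, div_eq_div_iff (by positivity) (by positivity)]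
    ring
  have := hasDerivAt_iff_tendsto_slope.mp hd
  have h2 := this.mono_left (nhdsWithin_mono 1 (fun y (hy : 1 < y) => ne_of_gt hy))
  apply h2.congr'
  filter_upwards [self_mem_nhdsWithin] with y (hy : 1 < y)
  have hne : y - 1 ≠ 0 := sub_ne_zero.mpr (ne_of_gt hy)
  rw [slope_def_field]
  norm_num

lemma contG : ContinuousOn G (Set.Ici 1) := by
  apply ContinuousOn.sub ((contF.const_smul ((3:ℝ)/4)).congr ?_) (by fun_prop)
  intro y _; simp [smul_eq_mul]

lemma lhop :
    Tendsto (fun x : ℝ => G x / (Real.sqrt 2 * ((x - 1) ^ 2 * Real.sqrt (x - 1)))) (𝓝[>] 1)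
      (𝓝 (3/20)) := by
  have hs2 : (0:ℝ) < Real.sqrt 2 := by positivity
  apply HasDerivAt.lhopital_zero_right_on_Ioo (f' := fun x =>
      (3/4) * (2 * Real.sqrt (x ^ 2 - 1)) - Real.sqrt 2 * ((3/2) * Real.sqrt (x - 1)))
    (g' := fun x => Real.sqrt 2 * ((5/2) * ((x - 1) * Real.sqrt (x - 1))))
    (one_lt_two)
  · intro x hx
    exact ((hasDerivAt_F hx.1).const_mul _).sub ((hasDerivAt_p hx.1).const_mul _)
  · intro x hx
    exact (hasDerivAt_q hx.1).const_mul _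
  · intro x hx
    have h1 : (0:ℝ) < x - 1 := by linarith [hx.1]
    have : (0:ℝ) < Real.sqrt (x - 1) := Real.sqrt_pos.mpr h1
    positivity
  · have := (contG 1 Set.self_mem_Ici).tendsto
    rw [show G 1 = 0 by simp [G, F_one]] at this
    exact this.mono_left (nhdsWithin_mono 1 Set.Ioi_subset_Ici_self)
  · have : Continuous fun x : ℝ => Real.sqrt 2 * ((x - 1) ^ 2 * Real.sqrt (x - 1)) := by
      fun_prop
    have h := this.tendsto 1
    norm_num at h
    exact h.mono_left nhdsWithin_le_nhds
  · have hc := slope_lim.const_mul (3 / (5 * Real.sqrt 2))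
    have hval : 3 / (5 * Real.sqrt 2) * (1 / (2 * Real.sqrt 2)) = 3/20 := by
      rw [div_mul_div_comm]
      rw [show 5 * Real.sqrt 2 * (2 * Real.sqrt 2) = 10 * (Real.sqrt 2 * Real.sqrt 2) by ring,
        Real.mul_self_sqrt (by norm_num)]
      norm_num
    rw [hval] at hc
    apply hc.congr'
    filter_upwards [self_mem_nhdsWithin] with x (hx : 1 < x)
    have h1 : (0:ℝ) < x - 1 := by linarith
    have hsx : (0:ℝ) < Real.sqrt (x - 1) := Real.sqrt_pos.mpr h1
    rw [sqrt_factor hx.le]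
    field_simp
    ring

lemma psi_gt_one {x : ℝ} (hx : 1 < x) : 1 < psi x := by
  have h1 : (0:ℝ) < x - 1 := by linarith
  have hs : (0:ℝ) < Real.sqrt (x - 1) := Real.sqrt_pos.mpr h1
  have hd : (0:ℝ) < Real.sqrt 2 * ((x - 1) * Real.sqrt (x - 1)) := by positivity
  rw [psi, lt_div_iff₀ hd, one_mul]
  have := G_pos hx
  simp only [G] at this
  linarith

lemma psi_slope :
    Tendsto (fun x : ℝ => (psi x - 1) / (x - 1)) (𝓝[>] 1) (𝓝 (3/20)) := by
  apply lhop.congr'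
  filter_upwards [self_mem_nhdsWithin] with x (hx : 1 < x)
  have h1 : (0:ℝ) < x - 1 := by linarith
  have hs : (0:ℝ) < Real.sqrt (x - 1) := Real.sqrt_pos.mpr h1
  have hs2 : (0:ℝ) < Real.sqrt 2 := by positivity
  have hD : Real.sqrt 2 * ((x - 1) * Real.sqrt (x - 1)) ≠ 0 := by positivity
  rw [psi, G, div_sub_one hD, div_div]
  congr 1
  ring

lemma psi_tendsto : Tendsto psi (𝓝[>] 1) (𝓝 1) := by
  have hlin : Tendsto (fun x : ℝ => x - 1) (𝓝[>] (1:ℝ)) (𝓝 0) := by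
    apply tendsto_nhdsWithin_of_tendsto_nhds
    simpa using (continuous_sub_right (1:ℝ)).tendsto 1
  have h := psi_slope.mul hlin
  norm_num at h
  have h2 : Tendsto (fun x : ℝ => (psi x - 1) / (x - 1) * (x - 1) + 1) (𝓝[>] 1) (𝓝 1) := by
    simpa using h.add tendsto_const_nhds
  apply h2.congr'
  filter_upwards [self_mem_nhdsWithin] with x (hx : 1 < x)
  have h1 : x - 1 ≠ 0 := by intro h; linarith [sub_eq_zero.mp h]
  field_simp
  ring

lemma zeta_eq {x : ℝ} (hx : 1 < x) :
    zeta x = (2:ℝ) ^ ((1:ℝ)/3) * (x - 1) * psi x ^ ((2:ℝ)/3) := by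
  have h1 : (0:ℝ) < x - 1 := by linarith
  have hs : (0:ℝ) < Real.sqrt (x - 1) := Real.sqrt_pos.mpr h1
  have hs2 : (0:ℝ) < Real.sqrt 2 := by positivity
  have hpsi : (0:ℝ) < psi x := lt_trans one_pos (psi_gt_one hx)
  have key : (3/4) * F x = Real.sqrt 2 * ((x - 1) * Real.sqrt (x - 1)) * psi x := by
    rw [psi]; field_simp
  have : zeta x = ((3/4) * F x) ^ ((2:ℝ)/3) := rfl
  rw [this, key, Real.mul_rpow (by positivity) hpsi.le,
    Real.mul_rpow hs2.le (by positivity)]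
  congr 1
  congr 1
  · rw [Real.sqrt_eq_rpow, ← Real.rpow_mul (by norm_num : (0:ℝ) ≤ 2)]
    norm_num
  · have hm : (x - 1) * Real.sqrt (x - 1) = (x - 1) ^ ((3:ℝ)/2) := by
      rw [Real.sqrt_eq_rpow, show ((3:ℝ)/2) = 1 + 1/2 by norm_num, Real.rpow_add h1,
        Real.rpow_one]
    rw [hm, ← Real.rpow_mul h1.le]
    norm_num

lemma pow_slope :
    Tendsto (fun y : ℝ => (1 - y ^ ((2:ℝ)/3)) / (y - 1)) (𝓝[≠] 1) (𝓝 (-(2/3))) := by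
  have hd : HasDerivAt (fun y : ℝ => y ^ ((2:ℝ)/3)) ((2:ℝ)/3) 1 := by
    have := Real.hasDerivAt_rpow_const (x := (1:ℝ)) (p := (2:ℝ)/3) (Or.inl one_ne_zero)
    simpa using this
  have h := (hasDerivAt_iff_tendsto_slope.mp hd).neg
  apply h.congr'
  filter_upwards [self_mem_nhdsWithin] with y (hy : y ≠ 1)
  rw [slope_def_field]
  rw [Real.one_rpow]
  ring

end InversionAux

open InversionAux

theorem tendsto_inversion_coeff_two :
    Tendsto (fun x : ℝ => (x - 1 - (2 : ℝ) ^ (-(1 : ℝ) / 3) * zeta x) / zeta x ^ 2)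
      (nhdsWithin 1 (Set.Ioi 1)) (nhds (-(2 : ℝ) ^ (-(2 : ℝ) / 3) / 10)) := by
  have hc : (0:ℝ) < (2:ℝ) ^ ((1:ℝ)/3) := Real.rpow_pos_of_pos two_pos _
  have hpsi_ne : Tendsto psi (𝓝[>] 1) (𝓝[≠] 1) := by
    rw [tendsto_nhdsWithin_iff]
    refine ⟨psi_tendsto, ?_⟩
    filter_upwards [self_mem_nhdsWithin] with x (hx : 1 < x)
    exact ne_of_gt (psi_gt_one hx)
  have h1 : Tendsto (fun x : ℝ => (1 - psi x ^ ((2:ℝ)/3)) / (psi x - 1)) (𝓝[>] 1)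
      (𝓝 (-(2/3))) := pow_slope.comp hpsi_ne
  have hA : Tendsto (fun x : ℝ => psi x ^ ((2:ℝ)/3)) (𝓝[>] 1) (𝓝 1) := by
    have hcont : ContinuousAt (fun y : ℝ => y ^ ((2:ℝ)/3)) 1 :=
      Real.continuousAt_rpow_const 1 _ (Or.inl one_ne_zero)
    have := hcont.tendsto.comp psi_tendsto
    simpa [Real.one_rpow, Function.comp_def] using this
  have h3 : Tendsto (fun x : ℝ => (((2:ℝ) ^ ((1:ℝ)/3)) ^ 2 * (psi x ^ ((2:ℝ)/3)) ^ 2)⁻¹)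
      (𝓝[>] 1) (𝓝 ((((2:ℝ) ^ ((1:ℝ)/3)) ^ 2 * 1)⁻¹)) := by
    apply Tendsto.inv₀
    · have := (hA.pow 2)
      simpa using tendsto_const_nhds.mul this
    · positivity
  have hprod := (h1.mul psi_slope).mul h3
  have hval : -(2/3 : ℝ) * (3/20) * ((((2:ℝ) ^ ((1:ℝ)/3)) ^ 2 * 1)⁻¹)
      = -(2 : ℝ) ^ (-(2 : ℝ) / 3) / 10 := by
    rw [show (-(2:ℝ)/3) = -((2:ℝ)/3) by ring, Real.rpow_neg (by norm_num),
      ← Real.rpow_natCast ((2:ℝ) ^ ((1:ℝ)/3)) 2, ← Real.rpow_mul (by norm_num)]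
    norm_num
    ring
  rw [hval] at hprod
  apply hprod.congr'
  filter_upwards [self_mem_nhdsWithin] with x (hx : 1 < x)
  have ht : (0:ℝ) < x - 1 := by linarith
  have hpsi : (1:ℝ) < psi x := psi_gt_one hx
  have hA0 : (0:ℝ) < psi x ^ ((2:ℝ)/3) := Real.rpow_pos_of_pos (by linarith) _
  rw [zeta_eq hx]
  rw [show (2:ℝ) ^ (-(1:ℝ)/3) = ((2:ℝ) ^ ((1:ℝ)/3))⁻¹ by
    rw [show (-(1:ℝ)/3) = -((1:ℝ)/3) by ring, Real.rpow_neg (by norm_num)]]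
  have hpne : psi x - 1 ≠ 0 := by linarith
  field_simp
end

section
/- As x → 1 from the right, the product φ(x)·b₀(x) tends to −(9/280)·2^{−1/3}, where φ(x) = ζ(x)/(x²−1), b₀(x) = −(1/(2·ζ(x)^{1/2}))·( x(x²−6)/(12(x²−1)^{3/2}) + 5/(24·ζ(x)^{3/2}) ), and ζ(x) = ( (3/4)·( x·√(x²−1) − arcosh x ) )^{2/3}. -/
open Real Filter

/-- The coefficient function
`b₀(x) = -(1/(2ζ^{1/2}))·(x(x²-6)/(12(x²-1)^{3/2}) + 5/(24ζ^{3/2}))`. -/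
noncomputable def b0 (x : ℝ) : ℝ :=
  -(1 / (2 * zeta x ^ ((1 : ℝ) / 2))) *
    (x * (x ^ 2 - 6) / (12 * (x ^ 2 - 1) ^ ((3 : ℝ) / 2)) +
      5 / (24 * zeta x ^ ((3 : ℝ) / 2)))

namespace PhiB0Aux

/-- `S θ = sinh θ cosh θ - θ`, which is `x √(x²-1) - arcosh x` at `x = cosh θ`. -/
noncomputable def S (θ : ℝ) : ℝ := Real.sinh θ * Real.cosh θ - θ

/-- The key numerator. -/
noncomputable def N (θ : ℝ) : ℝ :=
  3 * Real.cosh θ * (Real.cosh θ ^ 2 - 6) * S θ + 10 * Real.sinh θ ^ 3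

/-- Degree-7 Taylor remainder of `exp`. -/
noncomputable def R (y : ℝ) : ℝ :=
  Real.exp y - (1 + y + y ^ 2 / 2 + y ^ 3 / 6 + y ^ 4 / 24 + y ^ 5 / 120 +
    y ^ 6 / 720 + y ^ 7 / 5040)

lemma abs_R_le {y : ℝ} (hy : |y| ≤ 1) : |R y| ≤ |y| ^ 8 := by
  have h := Real.exp_bound hy (n := 8) (by norm_num)
  have hsum : ∑ m ∈ Finset.range 8, y ^ m / (Nat.factorial m : ℝ)
      = 1 + y + y ^ 2 / 2 + y ^ 3 / 6 + y ^ 4 / 24 + y ^ 5 / 120 +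
        y ^ 6 / 720 + y ^ 7 / 5040 := by
    simp [Finset.sum_range_succ, Nat.factorial]
  rw [hsum] at h
  calc |R y| ≤ |y| ^ 8 * ((8 + 1 : ℕ) / ((Nat.factorial 8 : ℝ) * 8)) := h
    _ ≤ |y| ^ 8 * 1 := by
        apply mul_le_mul_of_nonneg_left _ (by positivity)
        norm_num [Nat.factorial]
    _ = |y| ^ 8 := by ring

lemma exp5 (θ : ℝ) : Real.exp (5 * θ) = Real.exp θ ^ 5 := by
  rw [show (5 : ℝ) * θ = ((5 : ℕ) : ℝ) * θ by norm_num, Real.exp_nat_mul]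

lemma exp3 (θ : ℝ) : Real.exp (3 * θ) = Real.exp θ ^ 3 := by
  rw [show (3 : ℝ) * θ = ((3 : ℕ) : ℝ) * θ by norm_num, Real.exp_nat_mul]

lemma exp2 (θ : ℝ) : Real.exp (2 * θ) = Real.exp θ ^ 2 := by
  rw [show (2 : ℝ) * θ = ((2 : ℕ) : ℝ) * θ by norm_num, Real.exp_nat_mul]

/-- Exact remainder identity for `sinh`. -/
lemma sinh_id (θ : ℝ) :
    Real.sinh θ = θ + θ ^ 3 / 6 + θ ^ 5 / 120 + θ ^ 7 / 5040 + (R θ - R (-θ)) / 2 := by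
  have hE := (Real.exp_pos θ).ne'
  simp only [R, Real.sinh_eq, Real.exp_neg]
  field_simp
  ring

/-- Exact remainder identity for `S`. -/
lemma S_id (θ : ℝ) :
    S θ = (2 / 3) * θ ^ 3 + (2 / 15) * θ ^ 5 + (4 / 315) * θ ^ 7 +
      (R (2 * θ) - R (-(2 * θ))) / 4 := by
  have hE := (Real.exp_pos θ).ne'
  simp only [S, R, Real.sinh_eq, Real.cosh_eq, Real.exp_neg, exp2]
  field_simp
  ring

/-- Exact remainder identity for `N`. -/
lemma N_id (θ : ℝ) :
    N θ = (54 / 35) * θ ^ 7 +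
      ((3 / 32) * (R (5 * θ) - R (-(5 * θ))) - (23 / 32) * (R (3 * θ) - R (-(3 * θ))) -
        (93 / 16) * (R θ - R (-θ)) - (3 / 8) * θ * (R (3 * θ) + R (-(3 * θ))) +
        (63 / 8) * θ * (R θ + R (-θ))) := by
  have hE := (Real.exp_pos θ).ne'
  simp only [N, S, R, Real.sinh_eq, Real.cosh_eq, Real.exp_neg, exp5, exp3]
  field_simp
  ring

lemma abs_R_pair {a θ : ℝ} (ha : 0 < a) (hθ : 0 < θ) (h1 : a * θ ≤ 1) :
    |R (a * θ)| ≤ a ^ 8 * θ ^ 8 ∧ |R (-(a * θ))| ≤ a ^ 8 * θ ^ 8 := by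
  have habs : |a * θ| = a * θ := abs_of_pos (by positivity)
  have h1' : |a * θ| ≤ 1 := by rw [habs]; exact h1
  have h2' : |(-(a * θ))| ≤ 1 := by rwa [abs_neg]
  constructor
  · calc |R (a * θ)| ≤ |a * θ| ^ 8 := abs_R_le h1'
      _ = a ^ 8 * θ ^ 8 := by rw [habs]; ring
  · calc |R (-(a * θ))| ≤ |(-(a * θ))| ^ 8 := abs_R_le h2'
      _ = a ^ 8 * θ ^ 8 := by rw [abs_neg, habs]; ring

section Bounds

variable {θ : ℝ} (hθ : 0 < θ) (hθ' : θ ≤ 1 / 5)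

include hθ hθ' in
lemma pow_facts : θ ^ 3 ≤ (1/5) * θ ^ 2 ∧ θ ^ 5 ≤ (1/5) * θ ^ 2 ∧ θ ^ 7 ≤ (1/5) * θ ^ 2 ∧
    θ ^ 8 ≤ (1/5) * θ ^ 2 ∧ θ ^ 5 ≤ (1/5) * θ ^ 4 ∧ θ ^ 7 ≤ (1/5) * θ ^ 4 ∧
    θ ^ 8 ≤ (1/625) * θ ^ 4 ∧ θ ^ 9 ≤ (1/5) * θ ^ 8 := by
  have h1 : θ ≤ 1 := by linarith
  have hp : ∀ m n : ℕ, n ≤ m → θ ^ m ≤ θ ^ n := fun m n h =>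
    pow_le_pow_of_le_one hθ.le h1 h
  have hmul : ∀ n : ℕ, θ ^ (n + 1) ≤ (1/5) * θ ^ n := by
    intro n
    calc θ ^ (n + 1) = θ * θ ^ n := by ring
      _ ≤ (1/5) * θ ^ n := mul_le_mul_of_nonneg_right hθ' (pow_nonneg hθ.le n)
  have h84 : θ ^ 8 ≤ (1/625) * θ ^ 4 := by
    have : θ ^ 4 ≤ (1/5) ^ 4 := pow_le_pow_left₀ hθ.le hθ' 4
    calc θ ^ 8 = θ ^ 4 * θ ^ 4 := by ring
      _ ≤ (1/5) ^ 4 * θ ^ 4 := mul_le_mul_of_nonneg_right this (pow_nonneg hθ.le 4)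
      _ = (1/625) * θ ^ 4 := by norm_num
  refine ⟨hmul 2, le_trans (hp 5 3 (by norm_num)) (hmul 2),
    le_trans (hp 7 3 (by norm_num)) (hmul 2), le_trans (hp 8 3 (by norm_num)) (hmul 2),
    hmul 4, le_trans (hp 7 5 (by norm_num)) (hmul 4), h84, hmul 8⟩

include hθ hθ' in
lemma sinh_bound : |Real.sinh θ - 1 * θ ^ 1| ≤ 1 * θ ^ 2 := by
  obtain ⟨hr1, hr2⟩ := abs_R_pair one_pos hθ (by linarith)
  rw [one_mul] at hr1 hr2
  obtain ⟨p3, p5, p7, p8, -⟩ := pow_facts hθ hθ'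
  obtain ⟨a1, a2⟩ := abs_le.1 hr1
  obtain ⟨b1, b2⟩ := abs_le.1 hr2
  have heq : Real.sinh θ - 1 * θ ^ 1 =
      θ ^ 3 / 6 + θ ^ 5 / 120 + θ ^ 7 / 5040 + (R θ - R (-θ)) / 2 := by
    rw [sinh_id θ]; ring
  have q3 : 0 ≤ θ ^ 3 := pow_nonneg hθ.le 3
  have q5 : 0 ≤ θ ^ 5 := pow_nonneg hθ.le 5
  have q7 : 0 ≤ θ ^ 7 := pow_nonneg hθ.le 7
  have q2 : 0 ≤ θ ^ 2 := pow_nonneg hθ.le 2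
  rw [heq, abs_le]
  norm_num at a1 a2 b1 b2 ⊢
  constructor <;> linarith

include hθ hθ' in
lemma S_bound : |S θ - (2/3) * θ ^ 3| ≤ 1 * θ ^ 4 := by
  obtain ⟨hr1, hr2⟩ := abs_R_pair (a := 2) (by norm_num) hθ (by linarith)
  obtain ⟨-, -, -, -, p5, p7, p8, -⟩ := pow_facts hθ hθ'
  obtain ⟨a1, a2⟩ := abs_le.1 hr1
  obtain ⟨b1, b2⟩ := abs_le.1 hr2
  have heq : S θ - (2/3) * θ ^ 3 =
      (2/15) * θ ^ 5 + (4/315) * θ ^ 7 + (R (2*θ) - R (-(2*θ))) / 4 := by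
    rw [S_id θ]; ring
  have q5 : 0 ≤ θ ^ 5 := pow_nonneg hθ.le 5
  have q7 : 0 ≤ θ ^ 7 := pow_nonneg hθ.le 7
  have q4 : 0 ≤ θ ^ 4 := pow_nonneg hθ.le 4
  rw [heq, abs_le]
  norm_num at hr1 hr2 a1 a2 b1 b2 ⊢
  constructor <;> linarith

include hθ hθ' in
lemma N_bound : |N θ - (54/35) * θ ^ 7| ≤ 100000 * θ ^ 8 := by
  obtain ⟨hr51, hr52⟩ := abs_R_pair (a := 5) (by norm_num) hθ (by linarith)
  obtain ⟨hr31, hr32⟩ := abs_R_pair (a := 3) (by norm_num) hθ (by linarith)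
  obtain ⟨hr11, hr12⟩ := abs_R_pair (a := 1) one_pos hθ (by linarith)
  rw [one_mul] at hr11 hr12
  obtain ⟨-, -, -, -, -, -, -, p9⟩ := pow_facts hθ hθ'
  obtain ⟨a1, a2⟩ := abs_le.1 hr51
  obtain ⟨a3, a4⟩ := abs_le.1 hr52
  obtain ⟨b1, b2⟩ := abs_le.1 hr31
  obtain ⟨b3, b4⟩ := abs_le.1 hr32
  obtain ⟨c1, c2⟩ := abs_le.1 hr11
  obtain ⟨c3, c4⟩ := abs_le.1 hr12
  -- bounds on the θ·R products
  have ht3 : |θ * (R (3*θ) + R (-(3*θ)))| ≤ 2 * 6561 * (1/5) * θ ^ 8 := by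
    rw [abs_mul, abs_of_pos hθ]
    calc θ * |R (3*θ) + R (-(3*θ))| ≤ θ * (|R (3*θ)| + |R (-(3*θ))|) :=
          mul_le_mul_of_nonneg_left (abs_add_le _ _) hθ.le
      _ ≤ θ * (2 * (3:ℝ)^8 * θ ^ 8) := by
          apply mul_le_mul_of_nonneg_left _ hθ.le
          linarith
      _ = 2 * 6561 * θ ^ 9 := by norm_num; ring
      _ ≤ 2 * 6561 * (1/5) * θ ^ 8 := by nlinarith
  have ht1 : |θ * (R θ + R (-θ))| ≤ 2 * (1/5) * θ ^ 8 := by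
    rw [abs_mul, abs_of_pos hθ]
    calc θ * |R θ + R (-θ)| ≤ θ * (|R θ| + |R (-θ)|) :=
          mul_le_mul_of_nonneg_left (abs_add_le _ _) hθ.le
      _ ≤ θ * (2 * θ ^ 8) := by
          apply mul_le_mul_of_nonneg_left _ hθ.le
          norm_num at hr11 hr12 ⊢
          linarith
      _ = 2 * θ ^ 9 := by ring
      _ ≤ 2 * (1/5) * θ ^ 8 := by nlinarith
  obtain ⟨d1, d2⟩ := abs_le.1 ht3
  obtain ⟨e1, e2⟩ := abs_le.1 ht1
  have heq : N θ - (54/35) * θ ^ 7 =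
      (3/32) * (R (5*θ) - R (-(5*θ))) - (23/32) * (R (3*θ) - R (-(3*θ))) -
        (93/16) * (R θ - R (-θ)) - (3/8) * (θ * (R (3*θ) + R (-(3*θ)))) +
        (63/8) * (θ * (R θ + R (-θ))) := by
    rw [N_id θ]; ring
  have q8 : 0 ≤ θ ^ 8 := pow_nonneg hθ.le 8
  rw [heq, abs_le]
  norm_num at a1 a2 a3 a4 b1 b2 b3 b4 c1 c2 c3 c4 d1 d2 e1 e2 ⊢
  constructor <;> linarith

include hθ hθ' in
lemma S_pos : 0 < S θ := by
  have h := S_bound hθ hθ'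
  have h' := (abs_le.1 h).1
  nlinarith [pow_pos hθ 3, pow_pos hθ 4]

end Bounds

/-- The squeeze helper. -/
lemma tendsto_div_pow {f : ℝ → ℝ} {c C : ℝ} {k : ℕ}
    (h : ∀ θ ∈ Set.Ioc (0:ℝ) (1/5), |f θ - c * θ ^ k| ≤ C * θ ^ (k+1)) :
    Tendsto (fun θ => f θ / θ ^ k) (nhdsWithin 0 (Set.Ioi 0)) (nhds c) := by
  rw [← tendsto_sub_nhds_zero_iff]
  apply squeeze_zero_norm' (a := fun θ => C * θ)
  · filter_upwards [Ioc_mem_nhdsGT_of_mem (by norm_num : (0:ℝ) ∈ Set.Ico (0:ℝ) (1/5))]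
      with θ hθ
    have hθ0 : (0:ℝ) < θ := hθ.1
    have hpk : (0:ℝ) < θ ^ k := pow_pos hθ0 k
    have heq : f θ / θ ^ k - c = (f θ - c * θ ^ k) / θ ^ k := by
      field_simp
    rw [Real.norm_eq_abs, heq, abs_div, abs_of_pos hpk, div_le_iff₀ hpk]
    calc |f θ - c * θ ^ k| ≤ C * θ ^ (k+1) := h θ hθ
      _ = C * θ * θ ^ k := by ring
  · have : Tendsto (fun θ : ℝ => C * θ) (nhds 0) (nhds (C * 0)) :=
      (continuous_const.mul continuous_id).tendsto 0
    rw [mul_zero] at this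
    exact tendsto_nhdsWithin_of_tendsto_nhds this

lemma tendsto_sinh_div : Tendsto (fun θ : ℝ => Real.sinh θ / θ)
    (nhdsWithin 0 (Set.Ioi 0)) (nhds 1) := by
  have := tendsto_div_pow (f := Real.sinh) (c := 1) (C := 1) (k := 1)
    (fun θ hθ => sinh_bound hθ.1 hθ.2)
  simpa using this

lemma tendsto_S_div : Tendsto (fun θ : ℝ => S θ / θ ^ 3)
    (nhdsWithin 0 (Set.Ioi 0)) (nhds (2/3)) :=
  tendsto_div_pow (fun θ hθ => S_bound hθ.1 hθ.2)

lemma tendsto_N_div : Tendsto (fun θ : ℝ => N θ / θ ^ 7)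
    (nhdsWithin 0 (Set.Ioi 0)) (nhds (54/35)) :=
  tendsto_div_pow (fun θ hθ => N_bound hθ.1 hθ.2)

/-- The model function in the variable `θ`. -/
noncomputable def H (θ : ℝ) : ℝ :=
  -(2:ℝ) ^ (-(1:ℝ)/3) * ((3/2) * S θ / Real.sinh θ ^ 3) ^ ((1:ℝ)/3) *
    (N θ / (72 * S θ * Real.sinh θ ^ 4))

lemma tendsto_H : Tendsto H (nhdsWithin 0 (Set.Ioi 0))
    (nhds (-(9 / 280) * (2 : ℝ) ^ (-(1 : ℝ) / 3))) := by
  have hmem : Set.Ioc (0:ℝ) (1/5) ∈ nhdsWithin (0:ℝ) (Set.Ioi 0) :=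
    Ioc_mem_nhdsGT_of_mem (by norm_num : (0:ℝ) ∈ Set.Ico (0:ℝ) (1/5))
  -- the inner factor tends to 1
  have h2 : Tendsto (fun θ : ℝ => (3/2) * S θ / Real.sinh θ ^ 3)
      (nhdsWithin 0 (Set.Ioi 0)) (nhds 1) := by
    have hlim : Tendsto (fun θ : ℝ => (3/2) * (S θ / θ ^ 3) / (Real.sinh θ / θ) ^ 3)
        (nhdsWithin 0 (Set.Ioi 0)) (nhds ((3/2) * (2/3) / 1 ^ 3)) :=
      ((tendsto_const_nhds.mul tendsto_S_div).div (tendsto_sinh_div.pow 3) (by norm_num))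
    norm_num at hlim
    apply hlim.congr'
    filter_upwards [hmem] with θ hθ
    have hθ0 : (0:ℝ) < θ := hθ.1
    have hs : Real.sinh θ ≠ 0 := (Real.sinh_pos_iff.2 hθ0).ne'
    field_simp
  have h2' : Tendsto (fun θ : ℝ => ((3/2) * S θ / Real.sinh θ ^ 3) ^ ((1:ℝ)/3))
      (nhdsWithin 0 (Set.Ioi 0)) (nhds 1) := by
    have hc : ContinuousAt (fun v : ℝ => v ^ ((1:ℝ)/3)) 1 :=
      Real.continuousAt_rpow_const 1 ((1:ℝ)/3) (Or.inl one_ne_zero)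
    have := hc.tendsto.comp h2
    rw [Real.one_rpow] at this
    exact this
  have h3 : Tendsto (fun θ : ℝ => N θ / (72 * S θ * Real.sinh θ ^ 4))
      (nhdsWithin 0 (Set.Ioi 0)) (nhds (9/280)) := by
    have hlim : Tendsto (fun θ : ℝ => (N θ / θ ^ 7) / (72 * (S θ / θ ^ 3) * (Real.sinh θ / θ) ^ 4))
        (nhdsWithin 0 (Set.Ioi 0)) (nhds ((54/35) / (72 * (2/3) * 1 ^ 4))) :=
      tendsto_N_div.div ((tendsto_const_nhds.mul tendsto_S_div).mul (tendsto_sinh_div.pow 4))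
        (by norm_num)
    norm_num at hlim
    apply hlim.congr'
    filter_upwards [hmem] with θ hθ
    have hθ0 : (0:ℝ) < θ := hθ.1
    have hs : Real.sinh θ ≠ 0 := (Real.sinh_pos_iff.2 hθ0).ne'
    have hS : S θ ≠ 0 := (S_pos hθ0 hθ.2).ne'
    field_simp
  have hconst : Tendsto (fun _ : ℝ => -(2:ℝ) ^ (-(1:ℝ)/3)) (nhdsWithin 0 (Set.Ioi 0))
      (nhds (-(2:ℝ) ^ (-(1:ℝ)/3))) := tendsto_const_nhds
  have hfinal := (hconst.mul h2').mul h3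
  have heqv : -(2:ℝ) ^ (-(1:ℝ)/3) * 1 * (9/280) = -(9 / 280) * (2:ℝ) ^ (-(1:ℝ)/3) := by ring
  rw [heqv] at hfinal
  exact hfinal

/-- The main algebraic identity: at `x = cosh θ`, `φ(x) b₀(x) = H θ`. -/
lemma key_eq {θ : ℝ} (hθ : 0 < θ) (hθ' : θ ≤ 1/5) :
    phi (Real.cosh θ) * b0 (Real.cosh θ) = H θ := by
  have hw : 0 < Real.sinh θ := Real.sinh_pos_iff.2 hθ
  have hS := S_pos hθ hθ'
  have hc1 : Real.cosh θ ^ 2 - 1 = Real.sinh θ ^ 2 := by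
    rw [Real.cosh_sq]; ring
  have hsq : Real.sqrt (Real.cosh θ ^ 2 - 1) = Real.sinh θ := by
    rw [hc1, Real.sqrt_sq hw.le]
  have harc : _root_.arcosh (Real.cosh θ) = θ := by
    unfold _root_.arcosh
    rw [hsq, Real.cosh_add_sinh, Real.log_exp]
  have hBpos : 0 < (3/4) * S θ := by linarith
  have hzeta : zeta (Real.cosh θ) = ((3/4) * S θ) ^ ((2:ℝ)/3) := by
    unfold zeta S
    rw [harc, hsq, mul_comm (Real.cosh θ) (Real.sinh θ)]
  set B := (3/4) * S θ with hB
  set u := B ^ ((1:ℝ)/3) with hu_def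
  have hu : 0 < u := Real.rpow_pos_of_pos hBpos _
  have hu3 : u ^ 3 = B := by
    rw [hu_def, ← Real.rpow_natCast (B ^ ((1:ℝ)/3)) 3, ← Real.rpow_mul hBpos.le,
      show (1:ℝ)/3 * (3:ℕ) = 1 by norm_num, Real.rpow_one]
  have hz12 : zeta (Real.cosh θ) ^ ((1:ℝ)/2) = u := by
    rw [hzeta, ← Real.rpow_mul hBpos.le, show (2:ℝ)/3 * (1/2) = (1:ℝ)/3 by norm_num]
  have hz32 : zeta (Real.cosh θ) ^ ((3:ℝ)/2) = B := by
    rw [hzeta, ← Real.rpow_mul hBpos.le, show (2:ℝ)/3 * (3/2) = 1 by norm_num,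
      Real.rpow_one]
  have hz2 : zeta (Real.cosh θ) = u ^ 2 := by
    rw [hzeta, hu_def, ← Real.rpow_natCast (B ^ ((1:ℝ)/3)) 2, ← Real.rpow_mul hBpos.le,
      show (1:ℝ)/3 * (2:ℕ) = (2:ℝ)/3 by norm_num]
  have hw32 : (Real.cosh θ ^ 2 - 1) ^ ((3:ℝ)/2) = Real.sinh θ ^ 3 := by
    rw [hc1, ← Real.rpow_natCast (Real.sinh θ) 2, ← Real.rpow_mul hw.le,
      show (2:ℕ) * ((3:ℝ)/2) = ((3:ℕ):ℝ) by norm_num, Real.rpow_natCast]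
  have hrw : ((3/2) * S θ / Real.sinh θ ^ 3) ^ ((1:ℝ)/3)
      = (2*B) ^ ((1:ℝ)/3) / Real.sinh θ := by
    have h1 : (3/2) * S θ = 2*B := by rw [hB]; ring
    rw [h1, Real.div_rpow (by positivity) (by positivity),
      ← Real.rpow_natCast (Real.sinh θ) 3, ← Real.rpow_mul hw.le,
      show (3:ℕ) * ((1:ℝ)/3) = 1 by norm_num, Real.rpow_one]
  have h2B : (2:ℝ) ^ (-(1:ℝ)/3) * (2*B) ^ ((1:ℝ)/3) = u := by
    rw [Real.mul_rpow (by norm_num) hBpos.le, ← mul_assoc, ← Real.rpow_add two_pos,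
      show -(1:ℝ)/3 + (1:ℝ)/3 = 0 by norm_num, Real.rpow_zero, one_mul]
  have hc2 : -(2:ℝ) ^ (-(1:ℝ)/3) * ((2*B) ^ ((1:ℝ)/3) / Real.sinh θ)
      = -(u / Real.sinh θ) := by
    rw [neg_mul, mul_div_assoc', h2B]
  have hSu : S θ = (4/3) * u ^ 3 := by rw [hu3, hB]; ring
  have hBu : B = u ^ 3 := hu3.symm
  unfold phi b0 H N
  rw [hz12, hz32, hz2, hw32, hc1, hrw, hc2, hSu, hBu]
  have hwne : Real.sinh θ ≠ 0 := hw.ne'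
  have hune : u ≠ 0 := hu.ne'
  field_simp
  ring

end PhiB0Aux

theorem tendsto_phi_mul_b0_one :
    Tendsto (fun x : ℝ => phi x * b0 x) (nhdsWithin 1 (Set.Ioi 1))
      (nhds (-(9 / 280) * (2 : ℝ) ^ (-(1 : ℝ) / 3))) := by
  have harc_t : Tendsto _root_.arcosh (nhdsWithin 1 (Set.Ioi 1)) (nhdsWithin 0 (Set.Ioi 0)) := by
    rw [tendsto_nhdsWithin_iff]
    constructor
    · have hcont : ContinuousAt _root_.arcosh 1 := by
        unfold _root_.arcosh
        apply ContinuousAt.log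
        · exact (continuous_id.add (((continuous_pow 2).sub continuous_const).sqrt)).continuousAt
        · norm_num
      have h0 : _root_.arcosh 1 = 0 := by unfold _root_.arcosh; norm_num
      have hT := hcont.tendsto
      rw [h0] at hT
      exact tendsto_nhdsWithin_of_tendsto_nhds hT
    · filter_upwards [self_mem_nhdsWithin] with x hx
      have hx1 : (1:ℝ) < x := hx
      have hlt : (1:ℝ) < x + Real.sqrt (x^2 - 1) := by
        have := Real.sqrt_nonneg (x^2 - 1); linarith
      exact Real.log_pos hlt
  have hG : Tendsto (fun θ : ℝ => phi (Real.cosh θ) * b0 (Real.cosh θ))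
      (nhdsWithin 0 (Set.Ioi 0)) (nhds (-(9 / 280) * (2 : ℝ) ^ (-(1 : ℝ) / 3))) := by
    apply PhiB0Aux.tendsto_H.congr'
    filter_upwards [Ioc_mem_nhdsGT_of_mem (by norm_num : (0:ℝ) ∈ Set.Ico (0:ℝ) (1/5))]
      with θ hθ
    exact (PhiB0Aux.key_eq hθ.1 hθ.2).symm
  have hcomp := hG.comp harc_t
  apply Filter.Tendsto.congr' _ hcomp
  filter_upwards [self_mem_nhdsWithin] with x hx
  have hx1 : (1:ℝ) < x := hx
  have hx0 : 0 ≤ x^2 - 1 := by nlinarith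
  have hsq : Real.sqrt (x^2-1) ^ 2 = x^2 - 1 := Real.sq_sqrt hx0
  have hy : 0 < x + Real.sqrt (x^2-1) := by
    have := Real.sqrt_nonneg (x^2-1); linarith
  have hch : Real.cosh (_root_.arcosh x) = x := by
    unfold _root_.arcosh
    rw [Real.cosh_eq, Real.exp_neg, Real.exp_log hy]
    field_simp
    linear_combination hsq
  simp only [Function.comp_apply]
  rw [hch]
end
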